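/- arXiv:2503.06718 — 3 statements merged into one kernel-verified Lean document; each statement's English description precedes it below -/
import Mathlib

section
/- Let G be a strongly connected digraph and C a cycle (not necessarily directed) in G. Then either there is an edge e of C such that G\e is strongly connected, or there is a partition (A,B) of V(G) into nonempty sets such that there is exactly one edge from A to B and exactly one edge from B to A. -/
open SimpleGraph Set

variable {V W : Type*}

/-- An embedding witnessing that `G` contains a subdivision of `H` as a subgraph:
branch vertices are given by the injection `f`, and every edge of `H` is replaced by
a path of `G`, these paths being internally disjoint from each other and from the
branch vertices. -/
structure SubdivEmb (H : SimpleGraph W) (G : SimpleGraph V) where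
  f : W → V
  inj : Function.Injective f
  walk : ∀ ⦃a b : W⦄, H.Adj a b → G.Walk (f a) (f b)
  isPath : ∀ ⦃a b : W⦄ (h : H.Adj a b), (walk h).IsPath
  symm : ∀ ⦃a b : W⦄ (h : H.Adj a b), walk h.symm = (walk h).reverse
  branch : ∀ ⦃a b : W⦄ (h : H.Adj a b) (w : W), f w ∈ (walk h).support → w = a ∨ w = b
  disjoint : ∀ ⦃a b c d : W⦄ (h₁ : H.Adj a b) (h₂ : H.Adj c d), s(a,b) ≠ s(c,d) →
    ∀ x, x ∈ (walk h₁).support → x ∈ (walk h₂).support → x ∈ Set.range f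

/-- `G` contains a subdivision of `H` as a subgraph. -/
def ContainsSubdiv (G : SimpleGraph V) (H : SimpleGraph W) : Prop :=
  Nonempty (SubdivEmb H G)

/-- Witness that `G` is (exactly) a subdivision of `H`: a subdivision embedding
covering all vertices and edges of `G`. -/
structure SubdivIso (H : SimpleGraph W) (G : SimpleGraph V) extends SubdivEmb H G where
  vert_cover : ∀ x : V, x ∈ Set.range f ∨ ∃ (a b : W) (h : H.Adj a b), x ∈ (walk h).support
  edge_cover : ∀ e ∈ G.edgeSet, ∃ (a b : W) (h : H.Adj a b), e ∈ (walk h).edges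

/-- `G` is a subdivision of `H`. -/
def IsSubdivisionOf (G : SimpleGraph V) (H : SimpleGraph W) : Prop :=
  Nonempty (SubdivIso H G)

/-- Planarity, via Kuratowski's theorem: no subdivision of `K₅` nor of `K_{3,3}`
as a subgraph. -/
def Planar (G : SimpleGraph V) : Prop :=
  ¬ ContainsSubdiv G (completeGraph (Fin 5)) ∧
  ¬ ContainsSubdiv G (completeBipartiteGraph (Fin 3) (Fin 3))

/-- Outerplanarity, via the standard characterization: no subdivision of `K₄` nor
of `K_{2,3}` as a subgraph. -/
def Outerplanar (G : SimpleGraph V) : Prop :=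
  ¬ ContainsSubdiv G (completeGraph (Fin 4)) ∧
  ¬ ContainsSubdiv G (completeBipartiteGraph (Fin 2) (Fin 3))

/-- `G` is `k`-connected. -/
def KConnected (k : ℕ) (G : SimpleGraph V) : Prop :=
  k < Nat.card V ∧ ∀ s : Set V, s.ncard < k → (G.induce sᶜ).Connected

/-- There is no cycle of `G` all of whose edges lie in `F`. -/
def NoCycleIn (G : SimpleGraph V) (F : Set (Sym2 V)) : Prop :=
  ¬ ∃ (v : V) (c : G.Walk v v), c.IsCycle ∧ ∀ e ∈ c.edges, e ∈ F

/-- A nonplanar graph is almost-planar if it is 3-connected and the set of edges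
whose deletion leaves a nonplanar graph contains no cycle (i.e. is the edge set of
a forest). -/
def AlmostPlanar (G : SimpleGraph V) : Prop :=
  ¬ Planar G ∧ KConnected 3 G ∧
    NoCycleIn G {e | e ∈ G.edgeSet ∧ ¬ Planar (G.deleteEdges {e})}

/-- The `k`-rung Möbius ladder: a cycle of length `2k` with opposite vertices joined. -/
def mobiusLadder (k : ℕ) : SimpleGraph (Fin (2*k)) :=
  SimpleGraph.fromRel (fun a b => (b : ℕ) = ((a : ℕ) + 1) % (2*k) ∨ (b : ℕ) = ((a : ℕ) + k) % (2*k))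

/-- The `k`-wheel: a cycle of length `k` plus a hub (`none`) adjacent to every cycle vertex. -/
def wheelGraph (k : ℕ) : SimpleGraph (Option (Fin k)) :=
  SimpleGraph.fromRel (fun a b =>
    match a, b with
    | some i, some j => (j : ℕ) = ((i : ℕ) + 1) % k
    | some _, none => True
    | none, some _ => True
    | none, none => False)

/-- The graph `U₈` (vertices `p_1,…,p_8` are `0,…,7`). -/
def U8 : SimpleGraph (Fin 8) :=
  SimpleGraph.fromRel (fun a b =>
    ((a:ℕ), (b:ℕ)) ∈ [(0,4),(0,6),(0,3),(1,5),(1,7),(1,3),(2,3),(2,4),(2,5),(2,6),(2,7),(4,5),(6,7)])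

/-- The graph `W₈` (vertices `b_1,…,b_8` are `0,…,7`). -/
def W8 : SimpleGraph (Fin 8) :=
  SimpleGraph.fromRel (fun a b =>
    ((a:ℕ), (b:ℕ)) ∈ [(0,1),(1,2),(1,3),(2,4),(3,4),(2,5),(3,6),(4,7),(5,7),(6,7),(0,5),(0,6),(0,4)])

/-- A digraph with a specified vertex set (so that subdigraphs on fewer vertices
make sense). -/
structure Dgraph (V : Type _) where
  verts : Set V
  Adj : V → V → Prop
  mem_of_adj : ∀ ⦃u v : V⦄, Adj u v → u ∈ verts ∧ v ∈ verts

namespace Dgraph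

/-- `D` has no loops and no directed cycles of length two. -/
def NoDigon (D : Dgraph V) : Prop := ∀ u v, D.Adj u v → ¬ D.Adj v u

/-- The underlying (simple) graph of a digraph. -/
def und (D : Dgraph V) : SimpleGraph V where
  Adj u v := u ≠ v ∧ (D.Adj u v ∨ D.Adj v u)
  symm := by
    constructor
    intro u v h
    exact ⟨Ne.symm h.1, h.2.symm⟩
  loopless := by
    constructor
    intro v h
    exact h.1 rfl

/-- Subdigraph containment. -/
def Le (D₁ D₂ : Dgraph V) : Prop :=
  D₁.verts ⊆ D₂.verts ∧ ∀ ⦃u v⦄, D₁.Adj u v → D₂.Adj u v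

/-- A walk of the underlying graph is directed if all its darts are arcs of `D`. -/
def DirWalk (D : Dgraph V) {u v : V} (w : D.und.Walk u v) : Prop :=
  ∀ d ∈ w.darts, D.Adj d.toProd.1 d.toProd.2

/-- Strong connectivity: every vertex can reach every other vertex by a directed walk. -/
def Strong (D : Dgraph V) : Prop :=
  ∀ u ∈ D.verts, ∀ v ∈ D.verts, ∃ w : D.und.Walk u v, D.DirWalk w

/-- Delete the single arc `(a,b)` from `D`. -/
def delArc (D : Dgraph V) (a b : V) : Dgraph V where
  verts := D.verts
  Adj u v := D.Adj u v ∧ ¬ (u = a ∧ v = b)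
  mem_of_adj := fun _ _ h => D.mem_of_adj h.1

/-- `D` is planar if its underlying graph is. -/
def Planar' (D : Dgraph V) : Prop := Planar D.und

/-- `D` is series-parallel if its underlying graph contains no subdivision of `K₄`. -/
def SeriesParallel (D : Dgraph V) : Prop :=
  ¬ ContainsSubdiv D.und (completeGraph (Fin 4))

end Dgraph

/-- A witness that the digraph `D` is (exactly) a directed subdivision of the digraph `H`:
each arc `a → b` of `H` is replaced by a directed path of `D` from `f a` to `f b`, these
paths being internally disjoint, avoiding branch vertices internally, and covering all
vertices and arcs of `D`. -/
structure DirSubdivEmb (H : Dgraph W) (D : Dgraph V) where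
  f : W → V
  inj : Function.Injective f
  maps_verts : ∀ w ∈ H.verts, f w ∈ D.verts
  walk : ∀ ⦃a b : W⦄, H.Adj a b → D.und.Walk (f a) (f b)
  dir : ∀ ⦃a b : W⦄ (h : H.Adj a b), D.DirWalk (walk h)
  isPath : ∀ ⦃a b : W⦄ (h : H.Adj a b), (walk h).IsPath
  branch : ∀ ⦃a b : W⦄ (h : H.Adj a b) (w : W), w ∈ H.verts →
    f w ∈ (walk h).support → w = a ∨ w = b
  disjoint : ∀ ⦃a b c d : W⦄ (h₁ : H.Adj a b) (h₂ : H.Adj c d), (a,b) ≠ (c,d) →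
    ∀ x, x ∈ (walk h₁).support → x ∈ (walk h₂).support → ∃ w ∈ H.verts, f w = x
  vert_cover : ∀ x ∈ D.verts, (∃ w ∈ H.verts, f w = x) ∨
    ∃ (a b : W) (h : H.Adj a b), x ∈ (walk h).support
  edge_cover : ∀ ⦃x y : V⦄, D.Adj x y →
    ∃ (a b : W) (h : H.Adj a b), ∃ d ∈ (walk h).darts, d.toProd = (x, y)

/-- The digraph `D` is a directed subdivision of (a copy of) `H`. -/
def Dgraph.IsDirSubdivOf (D : Dgraph V) (H : Dgraph W) : Prop :=
  Nonempty (DirSubdivEmb H D)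

/-- Build a digraph on `Fin n` from a list of arcs. -/
def arcsD (n : ℕ) (l : List (ℕ × ℕ)) : Dgraph (Fin n) where
  verts := Set.univ
  Adj a b := ((a:ℕ), (b:ℕ)) ∈ l
  mem_of_adj := fun _ _ _ => ⟨trivial, trivial⟩

/-- The digraph whose directed subdivisions are the strong thetas: two directed paths
of length two from `0` to `1` (through `2` resp. `3`) together with a directed return
path `1 → 4 → 0`. -/
def thetaD : Dgraph (Fin 5) := arcsD 5 [(0,2),(2,1),(0,3),(3,1),(1,4),(4,0)]

/-- The digraph whose directed subdivisions are the reinforced thetas: three directed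
paths of length two from `0` to `1` together with the arc `1 → 0`. -/
def reinfThetaD : Dgraph (Fin 5) := arcsD 5 [(0,2),(2,1),(0,3),(3,1),(0,4),(4,1),(1,0)]

/-- The strong directed `K₄` (the strongly connected orientation of `K₄`, unique up
to isomorphism). -/
def strongK4D : Dgraph (Fin 4) := arcsD 4 [(0,1),(1,2),(2,3),(3,0),(0,2),(1,3)]

/-- The `2k`-diwheel: a cycle of length `2k` plus a hub (`none`) adjacent to every
cycle vertex, oriented so that every triangle is a directed triangle. -/
def diwheelD (k : ℕ) : Dgraph (Option (Fin (2*k))) where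
  verts := Set.univ
  Adj a b :=
    match a, b with
    | some i, some j => Even (i:ℕ) ∧
        (((j:ℕ) = ((i:ℕ) + 1) % (2*k)) ∨ ((i:ℕ) = ((j:ℕ) + 1) % (2*k)))
    | some i, none => Odd (i:ℕ)
    | none, some i => Even (i:ℕ)
    | none, none => False
  mem_of_adj := fun _ _ _ => ⟨trivial, trivial⟩

/-- Minimality under subdigraph containment among strongly connected nonplanar digraphs. -/
def MinStrongNonplanar (G : Dgraph V) : Prop :=
  G.Strong ∧ ¬ G.Planar' ∧
    ∀ D' : Dgraph V, D'.Le G → D'.Strong → ¬ D'.Planar' →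
      (D'.verts = G.verts ∧ ∀ u v, D'.Adj u v ↔ G.Adj u v)

/-- A Kuratowski digraph: minimal strongly connected nonplanar, and not a directed
subdivision of a smaller digraph. -/
def KuratowskiDigraph (G : Dgraph V) : Prop :=
  MinStrongNonplanar G ∧
    ¬ ∃ H : Dgraph V, H.verts.ncard < G.verts.ncard ∧ G.IsDirSubdivOf H

/-- The unordered pair `{x,y}` equals `{a,b}`. -/
def pairOf (x y a b : V) : Prop := (x = a ∧ y = b) ∨ (x = b ∧ y = a)

/-- `j` follows `i` in the cyclic order on `Fin n`. -/
def CycPair (n : ℕ) (i j : Fin n) : Prop :=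
  (j:ℕ) = (i:ℕ) + 1 ∨ ((i:ℕ) = n - 1 ∧ (j:ℕ) = 0)

/-- Given the cyclic list `l` of vertices of a cycle `C`, the chords `ab` and `cd`
`C`-cross: `a,b,c,d` are distinct and both paths of `C` between `a` and `b` contain
one of `c,d` (equivalently, exactly one of `c,d` lies strictly between `a` and `b`
in the list). -/
def CCross [DecidableEq V] (l : List V) (a b c d : V) : Prop :=
  ([a, b, c, d] : List V).Nodup ∧
  ∃ x y, ((x = c ∧ y = d) ∨ (x = d ∧ y = c)) ∧
    (min (l.idxOf a) (l.idxOf b) < l.idxOf x ∧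
      l.idxOf x < max (l.idxOf a) (l.idxOf b)) ∧
    ¬ (min (l.idxOf a) (l.idxOf b) < l.idxOf y ∧
      l.idxOf y < max (l.idxOf a) (l.idxOf b))

/-- A Möbius chain: a nonplanar graph obtained from a spanning cycle `C` by adding
chords so that every two chords `C`-cross or share an end, every vertex is an end of
some chord, and no cycle consists entirely of chords. -/
def IsMobiusChain [DecidableEq V] (G : SimpleGraph V) : Prop :=
  ¬ Planar G ∧
  ∃ (v : V) (C : G.Walk v v), C.IsCycle ∧ (∀ x : V, x ∈ C.support) ∧
    (∀ a b c d : V, G.Adj a b → s(a,b) ∉ C.edges → G.Adj c d → s(c,d) ∉ C.edges →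
      s(a,b) ≠ s(c,d) →
      (a = c ∨ a = d ∨ b = c ∨ b = d) ∨ CCross C.support.tail a b c d) ∧
    (∀ x : V, ∃ y, G.Adj x y ∧ s(x,y) ∉ C.edges) ∧
    NoCycleIn G {e | e ∈ G.edgeSet ∧ e ∉ C.edges}

/-- A scallop. -/
def IsScallop (G : SimpleGraph V) : Prop :=
  KConnected 3 G ∧
  (Nonempty (G ≃g completeGraph (Fin 5)) ∨
   ∃ (n : ℕ) (hn : 3 ≤ n) (c : Fin n → V) (u v w : V),
     Function.Injective c ∧ (∀ i, c i ≠ u ∧ c i ≠ v ∧ c i ≠ w) ∧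
     u ≠ v ∧ u ≠ w ∧ v ≠ w ∧
     (∀ x : V, (∃ i, x = c i) ∨ x = u ∨ x = v ∨ x = w) ∧
     (∀ i j, CycPair n i j → G.Adj (c i) (c j)) ∧
     G.Adj u v ∧ G.Adj u (c ⟨0, by omega⟩) ∧ G.Adj u (c ⟨n-1, by omega⟩) ∧
     G.Adj v (c ⟨0, by omega⟩) ∧ G.Adj v (c ⟨n-1, by omega⟩) ∧
     G.Adj w u ∧ G.Adj w v ∧
     (∀ i : Fin n, (i:ℕ) ≠ 0 → (i:ℕ) ≠ n - 1 → G.Adj w (c i)) ∧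
     (∀ x y, G.Adj x y →
       (∃ i j, CycPair n i j ∧ pairOf x y (c i) (c j)) ∨
       pairOf x y u v ∨
       pairOf x y u (c ⟨0, by omega⟩) ∨ pairOf x y u (c ⟨n-1, by omega⟩) ∨
       pairOf x y v (c ⟨0, by omega⟩) ∨ pairOf x y v (c ⟨n-1, by omega⟩) ∨
       pairOf x y w u ∨ pairOf x y w v ∨ (∃ i, pairOf x y w (c i))))

/-- A clam. -/
def IsClam (G : SimpleGraph V) : Prop :=
  KConnected 3 G ∧
  ∃ (n : ℕ) (_ : 3 ≤ n) (c : Fin n → V) (u v : V) (j : Fin n),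
    1 ≤ (j:ℕ) ∧ (j:ℕ) ≤ n - 2 ∧
    Function.Injective c ∧ (∀ i, c i ≠ u ∧ c i ≠ v) ∧ u ≠ v ∧
    (∀ x : V, (∃ i, x = c i) ∨ x = u ∨ x = v) ∧
    (∀ i k, CycPair n i k → G.Adj (c i) (c k)) ∧
    G.Adj u v ∧
    (∀ i : Fin n, G.Adj u (c i) ↔ ((i:ℕ) ≤ (j:ℕ) ∨ (i:ℕ) = n - 1)) ∧
    (∀ i : Fin n, G.Adj v (c i) ↔ ((j:ℕ) ≤ (i:ℕ) ∨ (i:ℕ) = 0)) ∧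
    (∀ x y, G.Adj x y →
      (∃ i k, CycPair n i k ∧ pairOf x y (c i) (c k)) ∨
      pairOf x y u v ∨ (∃ i, pairOf x y u (c i)) ∨ (∃ i, pairOf x y v (c i)))

/-- A whelk. -/
def IsWhelk (G : SimpleGraph V) : Prop :=
  KConnected 3 G ∧
  ∃ (n : ℕ) (_ : 3 ≤ n) (c : Fin n → V) (u v : V) (I J : Fin n),
    1 ≤ (I:ℕ) ∧ (I:ℕ) < (J:ℕ) ∧ (J:ℕ) ≤ n - 1 ∧
    Function.Injective c ∧ (∀ i, c i ≠ u ∧ c i ≠ v) ∧ u ≠ v ∧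
    (∀ x : V, (∃ i, x = c i) ∨ x = u ∨ x = v) ∧
    (∀ i k, CycPair n i k → G.Adj (c i) (c k)) ∧
    G.Adj u v ∧
    (∀ t : Fin n, G.Adj u (c t) ↔ (t:ℕ) ≤ (J:ℕ)) ∧
    (∀ t : Fin n, G.Adj v (c t) ↔ ((J:ℕ) ≤ (t:ℕ) ∨ (t:ℕ) = (I:ℕ))) ∧
    (∀ x y, G.Adj x y →
      (∃ i k, CycPair n i k ∧ pairOf x y (c i) (c k)) ∨
      pairOf x y u v ∨ (∃ i, pairOf x y u (c i)) ∨ (∃ i, pairOf x y v (c i)))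

/-- A double wheel: a 3-connected nonplanar graph consisting of a cycle plus two
adjacent vertices `u,v`, with at most one vertex of the cycle adjacent to both. -/
def IsDoubleWheel (G : SimpleGraph V) : Prop :=
  KConnected 3 G ∧ ¬ Planar G ∧
  ∃ (n : ℕ) (_ : 3 ≤ n) (c : Fin n → V) (u v : V),
    Function.Injective c ∧ (∀ i, c i ≠ u ∧ c i ≠ v) ∧ u ≠ v ∧
    (∀ x : V, (∃ i, x = c i) ∨ x = u ∨ x = v) ∧
    (∀ i k, CycPair n i k → G.Adj (c i) (c k)) ∧
    G.Adj u v ∧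
    (∀ x y, G.Adj x y →
      (∃ i k, CycPair n i k ∧ pairOf x y (c i) (c k)) ∨
      pairOf x y u v ∨ (∃ i, pairOf x y u (c i)) ∨ (∃ i, pairOf x y v (c i))) ∧
    (∀ i k : Fin n, G.Adj u (c i) → G.Adj v (c i) → G.Adj u (c k) → G.Adj v (c k) → i = k)

/-- A conch. -/
def IsConch (G : SimpleGraph V) : Prop :=
  KConnected 3 G ∧
  ∃ (p1 p2 p3 : V) (P Q : G.Walk p1 p2) (R : G.Walk p2 p3),
    p1 ≠ p2 ∧ p2 ≠ p3 ∧ p1 ≠ p3 ∧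
    P.IsPath ∧ Q.IsPath ∧ R.IsPath ∧
    p3 ∉ P.support ∧ p3 ∉ Q.support ∧ p1 ∉ R.support ∧
    (∀ x, x ∈ P.support → x ∈ Q.support → x = p1 ∨ x = p2) ∧
    (∀ x, x ∈ P.support → x ∈ R.support → x = p2) ∧
    (∀ x, x ∈ Q.support → x ∈ R.support → x = p2) ∧
    (∀ x : V, x ∈ P.support ∨ x ∈ Q.support ∨ x ∈ R.support ∨ x = p3) ∧
    (∃ x y, x ≠ y ∧ (x ∈ P.support ∧ x ≠ p1 ∧ x ≠ p2) ∧ (y ∈ P.support ∧ y ≠ p1 ∧ y ≠ p2) ∧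
      G.Adj p3 x ∧ G.Adj p3 y) ∧
    (∃ x y, x ≠ y ∧ (x ∈ Q.support ∧ x ≠ p1 ∧ x ≠ p2) ∧ (y ∈ Q.support ∧ y ≠ p1 ∧ y ≠ p2) ∧
      G.Adj p3 x ∧ G.Adj p3 y) ∧
    (∃ x y, x ≠ y ∧ (x ∈ R.support ∧ x ≠ p2 ∧ x ≠ p3) ∧ (y ∈ R.support ∧ y ≠ p2 ∧ y ≠ p3) ∧
      G.Adj p1 x ∧ G.Adj p1 y) ∧
    (∀ a b, G.Adj a b →
      s(a,b) ∈ P.edges ∨ s(a,b) ∈ Q.edges ∨ s(a,b) ∈ R.edges ∨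
      (∃ x, ((x ∈ P.support ∨ x ∈ Q.support) ∧ x ≠ p1 ∧ x ≠ p2) ∧ pairOf a b p3 x) ∨
      (∃ x, (x ∈ R.support ∧ x ≠ p2 ∧ x ≠ p3) ∧ pairOf a b p1 x) ∨
      pairOf a b p1 p2 ∨ pairOf a b p1 p3)

/-- A mussel. -/
def IsMussel (G : SimpleGraph V) : Prop :=
  KConnected 3 G ∧
  ∃ (p1 p2 p3 : V) (P Q R : G.Walk p1 p2),
    p1 ≠ p2 ∧ p2 ≠ p3 ∧ p1 ≠ p3 ∧
    P.IsPath ∧ Q.IsPath ∧ R.IsPath ∧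
    3 ≤ P.length ∧ 3 ≤ Q.length ∧ 3 ≤ R.length ∧
    p3 ∉ P.support ∧ p3 ∉ Q.support ∧ p3 ∉ R.support ∧
    (∀ x, x ∈ P.support → x ∈ Q.support → x = p1 ∨ x = p2) ∧
    (∀ x, x ∈ P.support → x ∈ R.support → x = p1 ∨ x = p2) ∧
    (∀ x, x ∈ Q.support → x ∈ R.support → x = p1 ∨ x = p2) ∧
    (∀ x : V, x ∈ P.support ∨ x ∈ Q.support ∨ x ∈ R.support ∨ x = p3) ∧
    (∀ x, ((x ∈ P.support ∨ x ∈ Q.support ∨ x ∈ R.support) ∧ x ≠ p1 ∧ x ≠ p2) →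
      G.Adj p3 x) ∧
    ¬ (G.Adj p1 p2 ∧ G.Adj p2 p3 ∧ G.Adj p1 p3) ∧
    (∀ a b, G.Adj a b →
      s(a,b) ∈ P.edges ∨ s(a,b) ∈ Q.edges ∨ s(a,b) ∈ R.edges ∨
      (∃ x, ((x ∈ P.support ∨ x ∈ Q.support ∨ x ∈ R.support) ∧ x ≠ p1 ∧ x ≠ p2) ∧
        pairOf a b p3 x) ∨
      pairOf a b p1 p2 ∨ pairOf a b p1 p3 ∨ pairOf a b p2 p3)

/-- `O` is an orientation of `G`. -/
def IsOrientation (G : SimpleGraph V) (O : V → V → Prop) : Prop :=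
  (∀ u v, G.Adj u v ↔ (O u v ∨ O v u)) ∧ ∀ u v, O u v → ¬ O v u

/-- Every fundamental cycle of the spanning tree `T` of `G` is a directed cycle in
the orientation `O`. -/
def GoodOrient (G T : SimpleGraph V) (O : V → V → Prop) : Prop :=
  ∀ x y, G.Adj x y → ¬ T.Adj x y → ∀ p : T.Walk y x, p.IsPath →
    (O x y ∧ ∀ d ∈ p.darts, O d.toProd.1 d.toProd.2) ∨
    (O y x ∧ ∀ d ∈ p.darts, O d.toProd.2 d.toProd.1)

/-- The rungs of the `k`-rung Möbius ladder. -/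
def isRung (k : ℕ) (a b : Fin (2*k)) : Prop :=
  (b:ℕ) = ((a:ℕ) + k) % (2*k) ∨ (a:ℕ) = ((b:ℕ) + k) % (2*k)

namespace Stmt0Aux

open SimpleGraph

variable {V : Type*}

/-- `S` has `(c,d)` as its unique entering arc. -/
def SValid (G : Dgraph V) (c d : V) (S : Set V) : Prop :=
  d ∈ S ∧ c ∉ S ∧ ∀ u w, G.Adj u w → w ∈ S → u ∉ S → u = c ∧ w = d

noncomputable def SMin (G : Dgraph V) (c d : V) : Set V := ⋂₀ {S | SValid G c d S}

lemma sMin_subset {G : Dgraph V} {c d : V} {S : Set V} (h : SValid G c d S) :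
    SMin G c d ⊆ S := Set.sInter_subset_of_mem h

lemma sValid_sMin {G : Dgraph V} {c d : V} (h : ∃ S, SValid G c d S) :
    SValid G c d (SMin G c d) := by
  obtain ⟨S₀, h₀⟩ := h
  refine ⟨Set.mem_sInter.2 fun S hS => hS.1, fun hc => h₀.2.1 (Set.mem_sInter.1 hc S₀ h₀), ?_⟩
  intro u w hadj hw hu
  have h2 : ¬ ∀ S ∈ {S | SValid G c d S}, u ∈ S := fun hh => hu (Set.mem_sInter.2 hh)
  push_neg at h2
  obtain ⟨S₁, hS₁, hu₁⟩ := h2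
  exact hS₁.2.2 u w hadj (Set.mem_sInter.1 hw S₁ hS₁) hu₁

lemma exists_cross_dart {H : SimpleGraph V} {S : Set V} :
    ∀ {u v : V} (w : H.Walk u v), u ∈ S → v ∉ S →
      ∃ dt ∈ w.darts, dt.toProd.1 ∈ S ∧ dt.toProd.2 ∉ S := by
  intro u v w
  induction w with
  | nil => intro h1 h2; exact absurd h1 h2
  | @cons a b c hadj p ih =>
    intro h1 h2
    by_cases hb : b ∈ S
    · obtain ⟨dt, hdt, hh⟩ := ih hb h2
      exact ⟨dt, by simp [SimpleGraph.Walk.darts_cons, hdt], hh⟩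
    · exact ⟨⟨(a, b), hadj⟩, by simp [SimpleGraph.Walk.darts_cons], h1, hb⟩

lemma exists_cross_dart' {H : SimpleGraph V} {S : Set V} {u v : V} (w : H.Walk u v)
    (h1 : u ∉ S) (h2 : v ∈ S) :
    ∃ dt ∈ w.darts, dt.toProd.1 ∉ S ∧ dt.toProd.2 ∈ S := by
  obtain ⟨dt, hdt, ha, hb⟩ := exists_cross_dart (S := Sᶜ) w h1 (by simp [h2])
  exact ⟨dt, hdt, ha, by simpa using hb⟩

lemma strong_in_arc {G : Dgraph V} (hv : G.verts = Set.univ) (hs : G.Strong)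
    {S : Set V} (h1 : S.Nonempty) (h2 : Sᶜ.Nonempty) :
    ∃ u w, G.Adj u w ∧ u ∉ S ∧ w ∈ S := by
  obtain ⟨v₀, hv₀⟩ := h1
  obtain ⟨u₀, hu₀⟩ := h2
  obtain ⟨w, hw⟩ := hs u₀ (by simp [hv]) v₀ (by simp [hv])
  obtain ⟨dt, hdt, ha, hb⟩ := exists_cross_dart' w hu₀ hv₀
  exact ⟨dt.toProd.1, dt.toProd.2, hw dt hdt, ha, hb⟩

lemma reroute {G : Dgraph V} {c d : V}
    (wcd : (G.delArc c d).und.Walk c d) (hwcd : (G.delArc c d).DirWalk wcd) :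
    ∀ {u v : V} (w : G.und.Walk u v), G.DirWalk w →
      ∃ w' : (G.delArc c d).und.Walk u v, (G.delArc c d).DirWalk w' := by
  intro u v w
  induction w with
  | nil =>
    intro _
    exact ⟨SimpleGraph.Walk.nil, fun dt hdt => by simp [SimpleGraph.Walk.darts_nil] at hdt⟩
  | @cons a b e hadj p ih =>
    intro hdir
    have hfirst : G.Adj a b := hdir ⟨(a, b), hadj⟩ (by simp [SimpleGraph.Walk.darts_cons])
    have hrest : G.DirWalk p := fun dt hdt => hdir dt (by simp [SimpleGraph.Walk.darts_cons, hdt])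
    obtain ⟨p', hp'⟩ := ih hrest
    by_cases hcd : a = c ∧ b = d
    · obtain ⟨rfl, rfl⟩ := hcd
      refine ⟨wcd.append p', ?_⟩
      intro dt hdt
      rw [SimpleGraph.Walk.darts_append] at hdt
      rcases List.mem_append.1 hdt with h | h
      · exact hwcd dt h
      · exact hp' dt h
    · refine ⟨SimpleGraph.Walk.cons ⟨hadj.1, Or.inl ⟨hfirst, hcd⟩⟩ p', ?_⟩
      intro dt hdt
      change dt ∈ _ :: _ at hdt
      rcases List.mem_cons.1 hdt with h | h
      · subst h; exact ⟨hfirst, hcd⟩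
      · exact hp' dt h

lemma exists_sValid {G : Dgraph V} (hv : G.verts = Set.univ) (hnd : G.NoDigon) (hs : G.Strong)
    {c d : V} (hadj : G.Adj c d) (hndel : ¬ (G.delArc c d).Strong) :
    ∃ S, SValid G c d S := by
  set D := G.delArc c d with hD
  set R : Set V := {z | ∃ w : D.und.Walk c z, D.DirWalk w} with hR
  have hcR : c ∈ R := ⟨SimpleGraph.Walk.nil, fun dt hdt => by
    simp [SimpleGraph.Walk.darts_nil] at hdt⟩
  have hdR : d ∉ R := by
    rintro ⟨wcd, hwcd⟩
    apply hndel
    intro u _ v _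
    obtain ⟨w, hw⟩ := hs u (by simp [hv]) v (by simp [hv])
    exact reroute wcd hwcd w hw
  refine ⟨Rᶜ, hdR, by simpa using hcR, ?_⟩
  intro u w huv hwR huR
  rw [Set.mem_compl_iff] at hwR
  rw [Set.mem_compl_iff, not_not] at huR
  by_contra hne
  apply hwR
  obtain ⟨wu, hwu⟩ := huR
  have hune : u ≠ w := by
    rintro rfl
    exact hnd u u huv huv
  refine ⟨wu.append (SimpleGraph.Walk.cons ⟨hune, Or.inl ⟨huv, hne⟩⟩ SimpleGraph.Walk.nil), ?_⟩
  intro dt hdt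
  rw [SimpleGraph.Walk.darts_append] at hdt
  rcases List.mem_append.1 hdt with h | h
  · exact hwu dt h
  · change dt ∈ _ :: _ at h
    rcases List.mem_cons.1 h with h | h
    · subst h; exact ⟨huv, hne⟩
    · simp [SimpleGraph.Walk.darts_nil] at h

lemma exists_cross_Carc {G : Dgraph V} [DecidableEq V] {v : V} {C : G.und.Walk v v}
    (hC : C.IsCycle) {c d : V} (hcd : s(c, d) ∈ C.edges)
    {X : Set V} (hd : d ∈ X) (hc : c ∉ X)
    (hin : ∀ u w, G.Adj u w → w ∈ X → u ∉ X → u = c ∧ w = d) :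
    ∃ x y, G.Adj x y ∧ x ∈ X ∧ y ∉ X ∧ s(x, y) ∈ C.edges ∧ s(x, y) ≠ s(c, d) := by
  have hcsup : c ∈ C.support := C.fst_mem_support_of_mem_edges hcd
  set w₃ := C.rotate c hcsup with hw₃
  have hrot := C.rotate_edges c hcsup
  have hmem : ∀ e, e ∈ w₃.edges ↔ e ∈ C.edges := fun e => hrot.mem_iff
  have hC₃ : w₃.IsCycle := hC.rotate hcsup
  have hnodup : w₃.edges.Nodup := hC₃.isCircuit.isTrail.edges_nodup
  have hcd₃ : s(c, d) ∈ w₃.edges := (hmem _).2 hcd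
  have hdsup : d ∈ w₃.support := w₃.snd_mem_support_of_mem_edges hcd₃
  have hspec := w₃.take_spec hdsup
  have hedges : w₃.edges = (w₃.takeUntil d hdsup).edges ++ (w₃.dropUntil d hdsup).edges := by
    conv_lhs => rw [← hspec]
    rw [SimpleGraph.Walk.edges_append]
  rw [hedges] at hnodup hcd₃
  have hdisj : ((w₃.takeUntil d hdsup).edges).Disjoint ((w₃.dropUntil d hdsup).edges) :=
    fun a ha hb => (List.nodup_append.1 hnodup).2.2 a ha a hb rfl
  have hCmem : ∀ e, e ∈ (w₃.takeUntil d hdsup).edges ∨ e ∈ (w₃.dropUntil d hdsup).edges →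
      e ∈ C.edges := by
    intro e he
    exact (hmem e).1 (hedges ▸ List.mem_append.2 he)
  rcases List.mem_append.1 hcd₃ with h1 | h2
  · obtain ⟨dt, hdt, hx, hy⟩ := exists_cross_dart (S := X) (w₃.dropUntil d hdsup) hd hc
    have hdte : s(dt.toProd.1, dt.toProd.2) ∈ (w₃.dropUntil d hdsup).edges := by
      have : dt.edge ∈ (w₃.dropUntil d hdsup).edges := List.mem_map_of_mem hdt
      simpa [SimpleGraph.Dart.edge] using this
    have hedge_ne : s(dt.toProd.1, dt.toProd.2) ≠ s(c, d) := by
      intro he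
      exact hdisj h1 (he ▸ hdte)
    rcases dt.adj.2 with ha | ha
    · exact ⟨dt.toProd.1, dt.toProd.2, ha, hx, hy, hCmem _ (Or.inr hdte), hedge_ne⟩
    · obtain ⟨h1', h2'⟩ := hin _ _ ha hx hy
      exact absurd (by rw [h1', h2']; exact Sym2.eq_swap) hedge_ne
  · obtain ⟨dt, hdt, hx, hy⟩ := exists_cross_dart' (S := X) (w₃.takeUntil d hdsup) hc hd
    have hdte : s(dt.toProd.1, dt.toProd.2) ∈ (w₃.takeUntil d hdsup).edges := by
      have : dt.edge ∈ (w₃.takeUntil d hdsup).edges := List.mem_map_of_mem hdt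
      simpa [SimpleGraph.Dart.edge] using this
    have hedge_ne : s(dt.toProd.1, dt.toProd.2) ≠ s(c, d) := by
      intro he
      exact hdisj (he ▸ hdte) h2
    rcases dt.adj.2 with ha | ha
    · obtain ⟨h1', h2'⟩ := hin _ _ ha hy hx
      exact absurd (by rw [h1', h2']) hedge_ne
    · refine ⟨dt.toProd.2, dt.toProd.1, ha, hy, hx, ?_, ?_⟩
      · rw [Sym2.eq_swap]; exact hCmem _ (Or.inl hdte)
      · rw [Sym2.eq_swap]; exact hedge_ne

lemma main {V : Type*} [Fintype V] [DecidableEq V] {G : Dgraph V}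
    (hv : G.verts = Set.univ) (hnd : G.NoDigon) (hs : G.Strong)
    {v : V} {C : G.und.Walk v v} (hC : C.IsCycle)
    (hdel : ∀ a b, G.Adj a b → s(a, b) ∈ C.edges → ¬ (G.delArc a b).Strong)
    (hpart : ¬ ∃ A B : Set V, A ∪ B = Set.univ ∧ Disjoint A B ∧ A.Nonempty ∧ B.Nonempty ∧
      (∃! p : V × V, G.Adj p.1 p.2 ∧ p.1 ∈ A ∧ p.2 ∈ B) ∧
      (∃! p : V × V, G.Adj p.1 p.2 ∧ p.1 ∈ B ∧ p.2 ∈ A)) :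
    False := by
  have hval : ∀ c d, G.Adj c d → s(c, d) ∈ C.edges → ∃ S, SValid G c d S :=
    fun c d h he => exists_sValid hv hnd hs h (hdel c d h he)
  set n := Nat.card V with hn
  have hcard : ∀ S : Set V, S.ncard ≤ n := by
    intro S
    rw [hn, ← Set.ncard_univ]
    exact Set.ncard_le_ncard (Set.subset_univ S) (Set.toFinite _)
  have KEY : ∀ μ : ℕ, ∀ c d : V, ∀ X : Set V, G.Adj c d → s(c, d) ∈ C.edges →
      SValid G c d X → (n - (SMin G c d).ncard) * (n + 1) + Xᶜ.ncard ≤ μ → False := by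
    intro μ
    induction μ with
    | zero =>
      intro c d X hadj he hX hle
      have h1 : (SMin G c d).ncard < n := by
        rw [hn, ← Set.ncard_univ]
        refine Set.ncard_lt_ncard ?_ (Set.toFinite _)
        refine ⟨Set.subset_univ _, fun hss => ?_⟩
        exact (sValid_sMin (hval c d hadj he)).2.1 (hss (Set.mem_univ c))
      have h2 : 1 ≤ n - (SMin G c d).ncard := by omega
      have h3 : n + 1 ≤ (n - (SMin G c d).ncard) * (n + 1) := by
        calc n + 1 = 1 * (n + 1) := by ring
        _ ≤ _ := Nat.mul_le_mul_right _ h2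
      omega
    | succ μ ih =>
      intro c d X hadj he hX hle
      obtain ⟨x, y, hxy, hxX, hyX, heC, hne⟩ :=
        exists_cross_Carc hC he hX.1 hX.2.1 hX.2.2
      set N' := SMin G x y with hN'def
      have hN' : SValid G x y N' := sValid_sMin (hval x y hxy heC)
      set Y := X ∪ N' with hYdef
      have hinY : ∀ u w, G.Adj u w → w ∈ Y → u ∉ Y → u = c ∧ w = d := by
        intro u w ha hw hu
        rcases hw with hw | hw
        · exact hX.2.2 u w ha hw fun h => hu (Or.inl h)
        · obtain ⟨h1, h2⟩ := hN'.2.2 u w ha hw fun h => hu (Or.inr h)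
          exact absurd (Or.inl (show u ∈ X from h1.symm ▸ hxX)) hu
      by_cases hYu : Yᶜ.Nonempty
      · -- Case A : grow X
        obtain ⟨u0, w0, hadj0, hu0, hw0⟩ := strong_in_arc hv hs ⟨d, Or.inl hX.1⟩ hYu
        obtain ⟨hu0c, hw0d⟩ := hinY u0 w0 hadj0 hw0 hu0
        have hYvalid : SValid G c d Y := ⟨Or.inl hX.1, hu0c ▸ hu0, hinY⟩
        have hstrict : Yᶜ.ncard < Xᶜ.ncard := by
          refine Set.ncard_lt_ncard ⟨Set.compl_subset_compl.2 Set.subset_union_left, ?_⟩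
            (Set.toFinite _)
          intro hss
          exact (hss hyX) (Or.inr hN'.1)
        exact ih c d Y hadj he hYvalid (by omega)
      · -- Y = univ
        have hYuniv : X ∪ N' = Set.univ := by
          rw [Set.not_nonempty_iff_eq_empty, Set.compl_empty_iff] at hYu
          exact hYu
        by_cases hXN : (X ∩ N').Nonempty
        · -- Case B2 : restart with (x, y)
          have hinZ : ∀ u w, G.Adj u w → w ∈ X ∩ N' → u ∉ X ∩ N' → u = c ∧ w = d := by
            intro u w ha hw hu
            by_cases huX : u ∈ X
            · have huN : u ∉ N' := fun h => hu ⟨huX, h⟩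
              obtain ⟨h1, h2⟩ := hN'.2.2 u w ha hw.2 huN
              exact absurd (h2 ▸ hw.1) hyX
            · exact hX.2.2 u w ha hw.1 huX
          have hZc : (X ∩ N')ᶜ.Nonempty := ⟨y, fun hy' => hyX hy'.1⟩
          obtain ⟨u0, w0, hadj0, hu0, hw0⟩ := strong_in_arc hv hs hXN hZc
          obtain ⟨hu0c, hw0d⟩ := hinZ u0 w0 hadj0 hw0 hu0
          have hZvalid : SValid G c d (X ∩ N') := ⟨hw0d ▸ hw0, hu0c ▸ hu0, hinZ⟩
          have hsubmin : SMin G c d ⊆ N' :=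
            (sMin_subset hZvalid).trans Set.inter_subset_right
          have hstrict : (SMin G c d).ncard < N'.ncard := by
            refine Set.ncard_lt_ncard ⟨hsubmin, fun hss => ?_⟩ (Set.toFinite _)
            exact hyX (sMin_subset hX (hss hN'.1))
          -- measure arithmetic
          have hNn : N'.ncard ≤ n := hcard _
          have hab : (n - N'.ncard) + 1 ≤ n - (SMin G c d).ncard := by
            have := hle
            have h1 : (SMin G c d).ncard < n := lt_of_lt_of_le hstrict hNn
            omega
          have hprod : ((n - N'.ncard) + 1) * (n + 1) ≤ (n - (SMin G c d).ncard) * (n + 1) :=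
            Nat.mul_le_mul_right _ hab
          have hexp : ((n - N'.ncard) + 1) * (n + 1)
              = (n - N'.ncard) * (n + 1) + (n + 1) := by ring
          have hN'c : N'ᶜ.ncard ≤ n := hcard _
          refine ih x y N' hxy heC hN' ?_
          rw [hN'def] at *
          omega
        · -- Case B1 : partition found
          apply hpart
          have hdisjXN : Disjoint X N' := by
            rw [Set.disjoint_iff_inter_eq_empty]
            exact Set.not_nonempty_iff_eq_empty.1 hXN
          have hcN : c ∈ N' := by
            have : c ∈ X ∪ N' := hYuniv ▸ Set.mem_univ c
            exact this.resolve_left hX.2.1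
          refine ⟨X, N', hYuniv, hdisjXN, ⟨d, hX.1⟩, ⟨y, hN'.1⟩, ?_, ?_⟩
          · refine ⟨(x, y), ⟨hxy, hxX, hN'.1⟩, ?_⟩
            rintro ⟨u, w⟩ ⟨hadj', huX, hwN⟩
            have huN : u ∉ N' := fun h => (Set.disjoint_left.1 hdisjXN) huX h
            obtain ⟨h1, h2⟩ := hN'.2.2 u w hadj' hwN huN
            exact Prod.ext h1 h2
          · refine ⟨(c, d), ⟨hadj, hcN, hX.1⟩, ?_⟩
            rintro ⟨u, w⟩ ⟨hadj', huN, hwX⟩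
            have huX : u ∉ X := fun h => (Set.disjoint_left.1 hdisjXN) h huN
            obtain ⟨h1, h2⟩ := hX.2.2 u w hadj' hwX huX
            exact Prod.ext h1 h2
  -- initial call
  cases C with
  | nil => exact hC.ne_nil rfl
  | @cons a b e hadj p =>
    have hedge : s(v, b) ∈ (SimpleGraph.Walk.cons hadj p).edges := by
      rw [SimpleGraph.Walk.edges_cons]
      exact List.mem_cons_self
    rcases hadj.2 with h | h
    · obtain ⟨X₀, hX₀⟩ := hval v b h hedge
      exact KEY _ v b X₀ h hedge hX₀ le_rfl
    · have hedge' : s(b, v) ∈ (SimpleGraph.Walk.cons hadj p).edges := Sym2.eq_swap ▸ hedge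
      obtain ⟨X₀, hX₀⟩ := hval b v h hedge'
      exact KEY _ b v X₀ h hedge' hX₀ le_rfl

end Stmt0Aux


/-- in a strong digraph, for every (not necessarily directed) cycle `C`,
either some edge of `C` can be deleted keeping the digraph strong, or there is a
partition `(A,B)` of the vertices with exactly one edge from `A` to `B` and exactly
one from `B` to `A`. -/
theorem stmt0 {V : Type*} [Fintype V] (G : Dgraph V) (hv : G.verts = Set.univ)
    (hnd : G.NoDigon) (hs : G.Strong)
    (v : V) (C : G.und.Walk v v) (hC : C.IsCycle) :
    (∃ a b, G.Adj a b ∧ s(a,b) ∈ C.edges ∧ (G.delArc a b).Strong) ∨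
    (∃ A B : Set V, A ∪ B = Set.univ ∧ Disjoint A B ∧ A.Nonempty ∧ B.Nonempty ∧
      (∃! p : V × V, G.Adj p.1 p.2 ∧ p.1 ∈ A ∧ p.2 ∈ B) ∧
      (∃! p : V × V, G.Adj p.1 p.2 ∧ p.1 ∈ B ∧ p.2 ∈ A)) := by
  classical
  by_cases hdel : ∃ a b, G.Adj a b ∧ s(a,b) ∈ C.edges ∧ (G.delArc a b).Strong
  · exact Or.inl hdel
  · right
    by_contra hpart
    push_neg at hdel
    exact Stmt0Aux.main hv hnd hs hC (fun a b h he => hdel a b h he) hpart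
end

section
/- Every 3-connected nonplanar graph other than K_5 contains a subdivision of K_{3,3} as a subgraph. -/
open SimpleGraph Set

variable {V W : Type*}

section Stmt9Aux

open Classical in
private lemma s9_isPath_append {V : Type*} {G : SimpleGraph V} {u v w : V}
    {p : G.Walk u v} {q : G.Walk v w}
    (hp : p.IsPath) (hq : q.IsPath)
    (hd : ∀ x ∈ p.support, x ∈ q.support → x = v) : (p.append q).IsPath := by
  rw [Walk.isPath_def, Walk.support_append, List.nodup_append]
  refine ⟨hp.support_nodup, ?_, ?_⟩
  · have := hq.support_nodup
    rw [q.support_eq_cons] at this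
    exact this.of_cons
  · intro x hxp y hxq hxy
    subst hxy
    have hxv : x = v := hd x hxp (List.mem_of_mem_tail hxq)
    subst hxv
    have := hq.support_nodup
    rw [q.support_eq_cons] at this
    exact (List.nodup_cons.mp this).1 hxq

private lemma s9_take_drop_inter {V : Type*} [DecidableEq V] {G : SimpleGraph V} {u v w : V}
    {p : G.Walk u v} (hp : p.IsPath)
    (h : w ∈ p.support) : ∀ x, x ∈ (p.takeUntil w h).support →
      x ∈ (p.dropUntil w h).support → x = w := by
  intro x hxt hxd
  have hs := p.take_spec h
  have hnd : p.support.Nodup := hp.support_nodup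
  rw [← hs, Walk.support_append, List.nodup_append] at hnd
  rw [(p.dropUntil w h).support_eq_cons, List.mem_cons] at hxd
  rcases hxd with h1 | h2
  · exact h1
  · exact absurd h2 (fun hx => hnd.2.2 x hxt x hx rfl)

private lemma s9_first_mem {V : Type*} {G : SimpleGraph V} (S : Set V) :
    ∀ {u w : V} (p : G.Walk u w), w ∈ S →
    ∃ z, ∃ _ : z ∈ S, ∃ q : G.Walk u z,
      (∀ x ∈ q.support, x ∈ S → x = z) ∧ (∀ x ∈ q.support, x ∈ p.support) := by
  intro u w p hw
  induction p with
  | nil => exact ⟨_, hw, Walk.nil, by simp +contextual, by simp⟩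
  | @cons a b c hab p ih =>
    by_cases ha : a ∈ S
    · exact ⟨a, ha, Walk.nil, by simp +contextual, by simp⟩
    · obtain ⟨z, hz, q, hq1, hq2⟩ := ih hw
      refine ⟨z, hz, Walk.cons hab q, ?_, ?_⟩
      · intro x hx hxS
        rw [Walk.support_cons, List.mem_cons] at hx
        rcases hx with rfl | hx
        · exact absurd hxS ha
        · exact hq1 x hx hxS
      · intro x hx
        rw [Walk.support_cons, List.mem_cons] at hx ⊢
        rcases hx with rfl | hx
        · exact Or.inl rfl
        · exact Or.inr (hq2 x hx)

private lemma s9_walk_avoiding {V : Type*} {G : SimpleGraph V} {s : Set V}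
    (hconn : (G.induce sᶜ).Connected) {u v : V} (hu : u ∉ s) (hv : v ∉ s) :
    ∃ p : G.Walk u v, ∀ z ∈ p.support, z ∉ s := by
  obtain ⟨q⟩ := hconn.preconnected ⟨u, hu⟩ ⟨v, hv⟩
  refine ⟨q.map ⟨Subtype.val, fun {x y} h => h⟩, ?_⟩
  intro z hz
  rw [Walk.support_map, List.mem_map] at hz
  obtain ⟨⟨z', hz'⟩, _, rfl⟩ := hz
  exact hz'

private lemma s9_len2 {V : Type*} {G : SimpleGraph V} {u w : V} (p : G.Walk u w) (z : V)
    (hz : z ∈ p.support) (hzu : z ≠ u) (hzw : z ≠ w) : 2 ≤ p.length := by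
  match p with
  | Walk.nil => simp at hz; exact absurd hz hzu
  | Walk.cons h Walk.nil =>
    simp [Walk.support_cons] at hz
    rcases hz with rfl | rfl
    · exact absurd rfl hzu
    · exact absurd rfl hzw
  | Walk.cons h (Walk.cons h' q) => simp only [Walk.length_cons]; omega

private lemma s9_interior {V : Type*} {G : SimpleGraph V} {u w : V} (p : G.Walk u w)
    (hp : p.IsPath) (hl : 2 ≤ p.length) : ∃ z ∈ p.support, z ≠ u ∧ z ≠ w := by
  match p with
  | Walk.nil => simp at hl
  | Walk.cons h Walk.nil => simp [Walk.length_cons] at hl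
  | @Walk.cons _ _ _ x _ h (Walk.cons h' q) =>
    refine ⟨x, by simp, ?_, ?_⟩
    · intro hxu
      subst hxu
      have := hp.support_nodup
      simp [Walk.support_cons] at this
    · intro hxw
      subst hxw
      have := (hp.of_cons).support_nodup
      rw [Walk.support_eq_cons] at this
      simp at this

private lemma s9_adj_of_short {V : Type*} {G : SimpleGraph V} {u w : V} (p : G.Walk u w)
    (huw : u ≠ w) (hl : p.length ≤ 1) : G.Adj u w := by
  match p with
  | Walk.nil => exact absurd rfl huw
  | Walk.cons h Walk.nil => exact h
  | Walk.cons h (Walk.cons h' q) => simp [Walk.length_cons] at hl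

private lemma s9_sym2_ne_left {α : Type*} {x y a b : α} (hxa : x ≠ a) (hxb : x ≠ b) :
    s(x,y) ≠ s(a,b) := by
  intro h
  rw [Sym2.eq_iff] at h
  rcases h with ⟨h1, _⟩ | ⟨h1, _⟩
  · exact hxa h1
  · exact hxb h1

private lemma s9_sym2_ne_right {α : Type*} {x y a b : α} (hya : y ≠ a) (hyb : y ≠ b) :
    s(x,y) ≠ s(a,b) := by
  intro h
  rw [Sym2.eq_iff] at h
  rcases h with ⟨_, h2⟩ | ⟨_, h2⟩
  · exact hyb h2
  · exact hya h2

private lemma s9_dec1 : ∀ a b : Fin 5, ∃ c : Fin 5, c ≠ a ∧ c ≠ b := by decide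

private lemma s9_dec2 : ∀ a b c : Fin 5, a ≠ b → c ≠ a → c ≠ b →
    ∃ d e : Fin 5, d ≠ e ∧ d ≠ a ∧ d ≠ b ∧ d ≠ c ∧ e ≠ a ∧ e ≠ b ∧ e ≠ c := by decide

private lemma s9_dec3 : ∀ w a b c d e : Fin 5, a ≠ b → c ≠ a → c ≠ b →
    d ≠ e → d ≠ a → d ≠ b → d ≠ c → e ≠ a → e ≠ b → e ≠ c →
    w = a ∨ w = b ∨ w = c ∨ w = d ∨ w = e := by
  intro w a b c d e h1 h2 h3 h4 h5 h6 h7 h8 h9 h10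
  by_contra hc
  push_neg at hc
  obtain ⟨n1, n2, n3, n4, n5⟩ := hc
  have hcard : ({w, a, b, c, d, e} : Finset (Fin 5)).card = 6 := by
    rw [Finset.card_insert_of_notMem (by simp [n1,n2,n3,n4,n5]),
      Finset.card_insert_of_notMem (by simp [h1, h2.symm, h5.symm, h8.symm]),
      Finset.card_insert_of_notMem (by simp [h3.symm, h6.symm, h9.symm]),
      Finset.card_insert_of_notMem (by simp [h7.symm, h10.symm, h4]),
      Finset.card_insert_of_notMem (by simp [h4]), Finset.card_singleton]
  have := Finset.card_le_univ ({w, a, b, c, d, e} : Finset (Fin 5))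
  simp [hcard] at this


private lemma s9_K5adj {a b : Fin 5} (h : a ≠ b) : (completeGraph (Fin 5)).Adj a b := h

private lemma s9_DDg {V : Type*} {G : SimpleGraph V}
    (E : SubdivEmb (completeGraph (Fin 5)) G)
    {w1 w2 w3 w4 : Fin 5} (h1 : (completeGraph (Fin 5)).Adj w1 w2)
    (h2 : (completeGraph (Fin 5)).Adj w3 w4) (hne : s(w1,w2) ≠ s(w3,w4)) {z : V}
    (hz1 : z ∈ (E.walk h1).support) (hz2 : z ∈ (E.walk h2).support) :
    ∃ w, (w = w1 ∨ w = w2) ∧ (w = w3 ∨ w = w4) ∧ z = E.f w := by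
  obtain ⟨w, hw⟩ := E.disjoint h1 h2 hne z hz1 hz2
  exact ⟨w, E.branch h1 w (hw ▸ hz1), E.branch h2 w (hw ▸ hz2), hw.symm⟩

private def s9_mkK33Emb {V : Type*} {G : SimpleGraph V} (g : Fin 3 ⊕ Fin 3 → V)
    (ginj : Function.Injective g)
    (Wk : ∀ i j : Fin 3, G.Walk (g (Sum.inl i)) (g (Sum.inr j)))
    (hpath : ∀ i j, (Wk i j).IsPath)
    (hbr : ∀ i j (w : Fin 3 ⊕ Fin 3), g w ∈ (Wk i j).support → w = Sum.inl i ∨ w = Sum.inr j)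
    (hdis : ∀ i j k l, (i,j) ≠ (k,l) →
      ∀ x, x ∈ (Wk i j).support → x ∈ (Wk k l).support → x ∈ Set.range g) :
    SubdivEmb (completeBipartiteGraph (Fin 3) (Fin 3)) G where
  f := g
  inj := ginj
  walk := fun a b h =>
    match a, b, h with
    | Sum.inl i, Sum.inr j, _ => Wk i j
    | Sum.inr j, Sum.inl i, _ => (Wk i j).reverse
    | Sum.inl _, Sum.inl _, h => False.elim (by simp at h)
    | Sum.inr _, Sum.inr _, h => False.elim (by simp at h)
  isPath := fun a b h =>
    match a, b, h with
    | Sum.inl i, Sum.inr j, _ => hpath i j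
    | Sum.inr j, Sum.inl i, _ => (hpath i j).reverse
  symm := fun a b h =>
    match a, b, h with
    | Sum.inl _, Sum.inr _, _ => rfl
    | Sum.inr _, Sum.inl _, _ => (Walk.reverse_reverse _).symm
  branch := fun a b h w hw =>
    match a, b, h with
    | Sum.inl i, Sum.inr j, _ => hbr i j w hw
    | Sum.inr j, Sum.inl i, _ =>
      (hbr i j w (by rwa [Walk.support_reverse, List.mem_reverse] at hw)).symm
  disjoint := fun a b c d h₁ h₂ hne x hx1 hx2 => by
    match a, b, c, d, h₁, h₂ with
    | Sum.inl i, Sum.inr j, Sum.inl k, Sum.inr l, _, _ =>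
      refine hdis i j k l (fun hc => hne ?_) x hx1 hx2
      simp only [Prod.mk.injEq] at hc
      rw [hc.1, hc.2]
    | Sum.inl i, Sum.inr j, Sum.inr l, Sum.inl k, _, _ =>
      rw [Walk.support_reverse, List.mem_reverse] at hx2
      refine hdis i j k l (fun hc => hne ?_) x hx1 hx2
      simp only [Prod.mk.injEq] at hc
      rw [hc.1, hc.2, Sym2.eq_swap]
    | Sum.inr j, Sum.inl i, Sum.inl k, Sum.inr l, _, _ =>
      rw [Walk.support_reverse, List.mem_reverse] at hx1
      refine hdis i j k l (fun hc => hne ?_) x hx1 hx2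
      simp only [Prod.mk.injEq] at hc
      rw [hc.1, hc.2, Sym2.eq_swap]
    | Sum.inr j, Sum.inl i, Sum.inr l, Sum.inl k, _, _ =>
      rw [Walk.support_reverse, List.mem_reverse] at hx1 hx2
      refine hdis i j k l (fun hc => hne ?_) x hx1 hx2
      simp only [Prod.mk.injEq] at hc
      rw [hc.1, hc.2]


private def s9_g (x0 x1 x2 y0 y1 y2 : V) : Fin 3 ⊕ Fin 3 → V := fun s =>
  match s with
  | Sum.inl ⟨0,_⟩ => x0 | Sum.inl ⟨1,_⟩ => x1 | Sum.inl ⟨_+2,_⟩ => x2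
  | Sum.inr ⟨0,_⟩ => y0 | Sum.inr ⟨1,_⟩ => y1 | Sum.inr ⟨_+2,_⟩ => y2

private lemma s9_g_range {x0 x1 x2 y0 y1 y2 z : V}
    (h : z = x0 ∨ z = x1 ∨ z = x2 ∨ z = y0 ∨ z = y1 ∨ z = y2) :
    z ∈ Set.range (s9_g x0 x1 x2 y0 y1 y2) := by
  rcases h with rfl|rfl|rfl|rfl|rfl|rfl
  · exact ⟨Sum.inl 0, rfl⟩
  · exact ⟨Sum.inl 1, rfl⟩
  · exact ⟨Sum.inl 2, rfl⟩
  · exact ⟨Sum.inr 0, rfl⟩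
  · exact ⟨Sum.inr 1, rfl⟩
  · exact ⟨Sum.inr 2, rfl⟩

private lemma s9_conX {G : SimpleGraph V} [DecidableEq V]
    (E : SubdivEmb (completeGraph (Fin 5)) G)
    {a b c : Fin 5} (hab : a ≠ b) (hca : c ≠ a) (hcb : c ≠ b)
    {x' : V} (hx'P : x' ∈ (E.walk (s9_K5adj hab)).support)
    (hx'a : x' ≠ E.f a) (hx'b : x' ≠ E.f b)
    (T3 : G.Walk x' (E.f c)) (hT3path : T3.IsPath)
    (R1 : ∀ w : Fin 5, E.f w ∈ T3.support → w = c)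
    (R2 : ∀ z ∈ T3.support, z ∈ (E.walk (s9_K5adj hab)).support → z = x')
    (R3 : ∀ z ∈ T3.support, ∀ ⦃w1 w2 : Fin 5⦄ (h1 : w1 ≠ w2), w1 ≠ a → w1 ≠ b → w1 ≠ c →
      z ∈ (E.walk (s9_K5adj h1)).support → z ∈ Set.range E.f) :
    ContainsSubdiv G (completeBipartiteGraph (Fin 3) (Fin 3)) := by
  obtain ⟨d, e, hde, hda, hdb, hdc, hea, heb, hec⟩ := s9_dec2 a b c hab hca hcb
  have hfP : ∀ w : Fin 5, E.f w ∈ (E.walk (s9_K5adj hab)).support → w = a ∨ w = b :=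
    fun w hw => E.branch (s9_K5adj hab) w hw
  have hx'nf : x' ∉ Set.range E.f := by
    rintro ⟨w, hw⟩
    rcases hfP w (hw ▸ hx'P) with h | h
    · exact hx'a (by rw [← hw, h])
    · exact hx'b (by rw [← hw, h])
  have cPD : ∀ w : Fin 5, w ≠ a → w ≠ b → E.f w ∈ (E.walk (s9_K5adj hab)).support → False :=
    fun w na nb h => (hfP w h).elim na nb
  have hPre1 : ∀ z, z ∈ ((E.walk (s9_K5adj hab)).takeUntil x' hx'P).reverse.support →
      z ∈ (E.walk (s9_K5adj hab)).support := by
    intro z hz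
    rw [Walk.support_reverse, List.mem_reverse] at hz
    exact Walk.support_takeUntil_subset _ hx'P hz
  have hPre2 : ∀ z, z ∈ ((E.walk (s9_K5adj hab)).dropUntil x' hx'P).support →
      z ∈ (E.walk (s9_K5adj hab)).support :=
    fun z hz => Walk.support_dropUntil_subset _ hx'P hz
  have intoRg : ∀ z : V, (z = x' ∨ ∃ w : Fin 5, z = E.f w) →
      z ∈ Set.range (s9_g x' (E.f d) (E.f e) (E.f a) (E.f b) (E.f c)) := by
    rintro z (rfl | ⟨w, rfl⟩)
    · exact s9_g_range (Or.inl rfl)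
    · rcases s9_dec3 w a b c d e hab hca hcb hde hda hdb hdc hea heb hec with rfl|rfl|rfl|rfl|rfl
      · exact s9_g_range (Or.inr (Or.inr (Or.inr (Or.inl rfl))))
      · exact s9_g_range (Or.inr (Or.inr (Or.inr (Or.inr (Or.inl rfl)))))
      · exact s9_g_range (Or.inr (Or.inr (Or.inr (Or.inr (Or.inr rfl)))))
      · exact s9_g_range (Or.inr (Or.inl rfl))
      · exact s9_g_range (Or.inr (Or.inr (Or.inl rfl)))
  have q12 : ∀ z, z ∈ ((E.walk (s9_K5adj hab)).takeUntil x' hx'P).reverse.support →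
      z ∈ ((E.walk (s9_K5adj hab)).dropUntil x' hx'P).support →
      z ∈ Set.range (s9_g x' (E.f d) (E.f e) (E.f a) (E.f b) (E.f c)) := by
    intro z h1 h2
    rw [Walk.support_reverse, List.mem_reverse] at h1
    exact intoRg z (Or.inl (s9_take_drop_inter (E.isPath _) hx'P z h1 h2))
  have q13 : ∀ z, z ∈ ((E.walk (s9_K5adj hab)).takeUntil x' hx'P).reverse.support →
      z ∈ T3.support →
      z ∈ Set.range (s9_g x' (E.f d) (E.f e) (E.f a) (E.f b) (E.f c)) :=
    fun z h1 h2 => intoRg z (Or.inl (R2 z h2 (hPre1 z h1)))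
  have q23 : ∀ z, z ∈ ((E.walk (s9_K5adj hab)).dropUntil x' hx'P).support →
      z ∈ T3.support →
      z ∈ Set.range (s9_g x' (E.f d) (E.f e) (E.f a) (E.f b) (E.f c)) :=
    fun z h1 h2 => intoRg z (Or.inl (R2 z h2 (hPre2 z h1)))
  have qPD : ∀ {w1 w2 : Fin 5} (h1 : w1 ≠ w2), w1 ≠ a → w1 ≠ b →
      ∀ z, z ∈ (E.walk (s9_K5adj hab)).support → z ∈ (E.walk (s9_K5adj h1)).support →
      z ∈ Set.range (s9_g x' (E.f d) (E.f e) (E.f a) (E.f b) (E.f c)) := by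
    intro w1 w2 h1 na nb z hz1 hz2
    obtain ⟨w, _, _, heq⟩ := s9_DDg E (s9_K5adj hab) (s9_K5adj h1)
      (Ne.symm (s9_sym2_ne_left na nb)) hz1 hz2
    exact intoRg z (Or.inr ⟨w, heq⟩)
  have q3D : ∀ {w1 w2 : Fin 5} (h1 : w1 ≠ w2), w1 ≠ a → w1 ≠ b → w1 ≠ c →
      ∀ z, z ∈ T3.support → z ∈ (E.walk (s9_K5adj h1)).support →
      z ∈ Set.range (s9_g x' (E.f d) (E.f e) (E.f a) (E.f b) (E.f c)) := by
    intro w1 w2 h1 na nb nc z hz1 hz2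
    obtain ⟨w, heq⟩ := R3 z hz1 h1 na nb nc hz2
    exact intoRg z (Or.inr ⟨w, heq.symm⟩)
  have qDD : ∀ {w1 w2 w3 w4 : Fin 5} (h1 : w1 ≠ w2) (h2 : w3 ≠ w4),
      s(w1,w2) ≠ s(w3,w4) →
      ∀ z, z ∈ (E.walk (s9_K5adj h1)).support → z ∈ (E.walk (s9_K5adj h2)).support →
      z ∈ Set.range (s9_g x' (E.f d) (E.f e) (E.f a) (E.f b) (E.f c)) := by
    intro w1 w2 w3 w4 h1 h2 hs z hz1 hz2
    obtain ⟨w, _, _, heq⟩ := s9_DDg E (s9_K5adj h1) (s9_K5adj h2) hs hz1 hz2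
    exact intoRg z (Or.inr ⟨w, heq⟩)
  have cx'D : ∀ {w1 w2 : Fin 5} (h1 : w1 ≠ w2), w1 ≠ a → w1 ≠ b →
      x' ∈ (E.walk (s9_K5adj h1)).support → False := by
    intro w1 w2 h1 na nb hx
    obtain ⟨w, _, _, heq⟩ := s9_DDg E (s9_K5adj h1) (s9_K5adj hab)
      (s9_sym2_ne_left na nb) hx hx'P
    exact hx'nf ⟨w, heq.symm⟩
  have cT1b : E.f b ∈ ((E.walk (s9_K5adj hab)).takeUntil x' hx'P).reverse.support → False := by
    intro h
    rw [Walk.support_reverse, List.mem_reverse] at h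
    exact hx'b.symm (s9_take_drop_inter (E.isPath _) hx'P _ h (Walk.end_mem_support _))
  have cT2a : E.f a ∈ ((E.walk (s9_K5adj hab)).dropUntil x' hx'P).support → False := by
    intro h
    exact hx'a.symm (s9_take_drop_inter (E.isPath _) hx'P _ (Walk.start_mem_support _) h)
  refine ⟨s9_mkK33Emb (s9_g x' (E.f d) (E.f e) (E.f a) (E.f b) (E.f c))
    ?_
    (fun i j => match i, j with
      | ⟨0,_⟩, ⟨0,_⟩ => ((E.walk (s9_K5adj hab)).takeUntil x' hx'P).reverse
      | ⟨0,_⟩, ⟨1,_⟩ => (E.walk (s9_K5adj hab)).dropUntil x' hx'P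
      | ⟨0,_⟩, ⟨_+2,_⟩ => T3
      | ⟨1,_⟩, ⟨0,_⟩ => E.walk (s9_K5adj hda)
      | ⟨1,_⟩, ⟨1,_⟩ => E.walk (s9_K5adj hdb)
      | ⟨1,_⟩, ⟨_+2,_⟩ => E.walk (s9_K5adj hdc)
      | ⟨_+2,_⟩, ⟨0,_⟩ => E.walk (s9_K5adj hea)
      | ⟨_+2,_⟩, ⟨1,_⟩ => E.walk (s9_K5adj heb)
      | ⟨_+2,_⟩, ⟨_+2,_⟩ => E.walk (s9_K5adj hec))
    ?_ ?_ ?_⟩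
  · -- injectivity
    intro s t hst
    have n01 : x' ≠ E.f d := fun h => hx'nf ⟨d, h.symm⟩
    have n02 : x' ≠ E.f e := fun h => hx'nf ⟨e, h.symm⟩
    have n05 : x' ≠ E.f c := fun h => hx'nf ⟨c, h.symm⟩
    fin_cases s <;> fin_cases t <;>
      first
      | rfl
      | exact absurd hst n01 | exact absurd hst n01.symm
      | exact absurd hst n02 | exact absurd hst n02.symm
      | exact absurd hst hx'a | exact absurd hst hx'a.symm
      | exact absurd hst hx'b | exact absurd hst hx'b.symm
      | exact absurd hst n05 | exact absurd hst n05.symm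
      | exact absurd hst (E.inj.ne hde) | exact absurd hst (E.inj.ne hde).symm
      | exact absurd hst (E.inj.ne hda) | exact absurd hst (E.inj.ne hda).symm
      | exact absurd hst (E.inj.ne hdb) | exact absurd hst (E.inj.ne hdb).symm
      | exact absurd hst (E.inj.ne hdc) | exact absurd hst (E.inj.ne hdc).symm
      | exact absurd hst (E.inj.ne hea) | exact absurd hst (E.inj.ne hea).symm
      | exact absurd hst (E.inj.ne heb) | exact absurd hst (E.inj.ne heb).symm
      | exact absurd hst (E.inj.ne hec) | exact absurd hst (E.inj.ne hec).symm
      | exact absurd hst (E.inj.ne hab) | exact absurd hst (E.inj.ne hab).symm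
      | exact absurd hst (E.inj.ne hca) | exact absurd hst (E.inj.ne hca).symm
      | exact absurd hst (E.inj.ne hcb) | exact absurd hst (E.inj.ne hcb).symm
  · -- paths
    intro i j
    fin_cases i <;> fin_cases j
    · exact ((E.isPath (s9_K5adj hab)).takeUntil hx'P).reverse
    · exact (E.isPath (s9_K5adj hab)).dropUntil hx'P
    · exact hT3path
    · exact E.isPath (s9_K5adj hda)
    · exact E.isPath (s9_K5adj hdb)
    · exact E.isPath (s9_K5adj hdc)
    · exact E.isPath (s9_K5adj hea)
    · exact E.isPath (s9_K5adj heb)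
    · exact E.isPath (s9_K5adj hec)
  · -- branch
    intro i j w hw
    fin_cases i <;> fin_cases j <;> (rcases w with wi | wj <;> [fin_cases wi; fin_cases wj])
    · exact Or.inl rfl
    · exact (cPD d hda hdb (hPre1 _ hw)).elim
    · exact (cPD e hea heb (hPre1 _ hw)).elim
    · exact Or.inr rfl
    · exact (cT1b hw).elim
    · exact (cPD c hca hcb (hPre1 _ hw)).elim
    · exact Or.inl rfl
    · exact (cPD d hda hdb (hPre2 _ hw)).elim
    · exact (cPD e hea heb (hPre2 _ hw)).elim
    · exact (cT2a hw).elim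
    · exact Or.inr rfl
    · exact (cPD c hca hcb (hPre2 _ hw)).elim
    · exact Or.inl rfl
    · exact (hdc (R1 d hw)).elim
    · exact (hec (R1 e hw)).elim
    · exact (hca.symm (R1 a hw)).elim
    · exact (hcb.symm (R1 b hw)).elim
    · exact Or.inr rfl
    · exact (cx'D hda hda hdb hw).elim
    · exact Or.inl rfl
    · exact ((E.branch (s9_K5adj hda) e hw).elim (fun h => absurd h hde.symm) (fun h => absurd h hea))
    · exact Or.inr rfl
    · exact ((E.branch (s9_K5adj hda) b hw).elim (fun h => absurd h hdb.symm) (fun h => absurd h hab.symm))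
    · exact ((E.branch (s9_K5adj hda) c hw).elim (fun h => absurd h hdc.symm) (fun h => absurd h hca))
    · exact (cx'D hdb hda hdb hw).elim
    · exact Or.inl rfl
    · exact ((E.branch (s9_K5adj hdb) e hw).elim (fun h => absurd h hde.symm) (fun h => absurd h heb))
    · exact ((E.branch (s9_K5adj hdb) a hw).elim (fun h => absurd h hda.symm) (fun h => absurd h hab))
    · exact Or.inr rfl
    · exact ((E.branch (s9_K5adj hdb) c hw).elim (fun h => absurd h hdc.symm) (fun h => absurd h hcb))
    · exact (cx'D hdc hda hdb hw).elim
    · exact Or.inl rfl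
    · exact ((E.branch (s9_K5adj hdc) e hw).elim (fun h => absurd h hde.symm) (fun h => absurd h hec))
    · exact ((E.branch (s9_K5adj hdc) a hw).elim (fun h => absurd h hda.symm) (fun h => absurd h hca.symm))
    · exact ((E.branch (s9_K5adj hdc) b hw).elim (fun h => absurd h hdb.symm) (fun h => absurd h hcb.symm))
    · exact Or.inr rfl
    · exact (cx'D hea hea heb hw).elim
    · exact ((E.branch (s9_K5adj hea) d hw).elim (fun h => absurd h hde) (fun h => absurd h hda))
    · exact Or.inl rfl
    · exact Or.inr rfl
    · exact ((E.branch (s9_K5adj hea) b hw).elim (fun h => absurd h heb.symm) (fun h => absurd h hab.symm))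
    · exact ((E.branch (s9_K5adj hea) c hw).elim (fun h => absurd h hec.symm) (fun h => absurd h hca))
    · exact (cx'D heb hea heb hw).elim
    · exact ((E.branch (s9_K5adj heb) d hw).elim (fun h => absurd h hde) (fun h => absurd h hdb))
    · exact Or.inl rfl
    · exact ((E.branch (s9_K5adj heb) a hw).elim (fun h => absurd h hea.symm) (fun h => absurd h hab))
    · exact Or.inr rfl
    · exact ((E.branch (s9_K5adj heb) c hw).elim (fun h => absurd h hec.symm) (fun h => absurd h hcb))
    · exact (cx'D hec hea heb hw).elim
    · exact ((E.branch (s9_K5adj hec) d hw).elim (fun h => absurd h hde) (fun h => absurd h hdc))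
    · exact Or.inl rfl
    · exact ((E.branch (s9_K5adj hec) a hw).elim (fun h => absurd h hea.symm) (fun h => absurd h hca.symm))
    · exact ((E.branch (s9_K5adj hec) b hw).elim (fun h => absurd h heb.symm) (fun h => absurd h hcb.symm))
    · exact Or.inr rfl
  · -- disjoint
    intro i j k l hne x hx1 hx2
    fin_cases i <;> fin_cases j <;> fin_cases k <;> fin_cases l
    · exact absurd rfl hne
    · exact q12 x hx1 hx2
    · exact q13 x hx1 hx2
    · exact qPD hda hda hdb x (hPre1 x hx1) hx2
    · exact qPD hdb hda hdb x (hPre1 x hx1) hx2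
    · exact qPD hdc hda hdb x (hPre1 x hx1) hx2
    · exact qPD hea hea heb x (hPre1 x hx1) hx2
    · exact qPD heb hea heb x (hPre1 x hx1) hx2
    · exact qPD hec hea heb x (hPre1 x hx1) hx2
    · exact q12 x hx2 hx1
    · exact absurd rfl hne
    · exact q23 x hx1 hx2
    · exact qPD hda hda hdb x (hPre2 x hx1) hx2
    · exact qPD hdb hda hdb x (hPre2 x hx1) hx2
    · exact qPD hdc hda hdb x (hPre2 x hx1) hx2
    · exact qPD hea hea heb x (hPre2 x hx1) hx2
    · exact qPD heb hea heb x (hPre2 x hx1) hx2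
    · exact qPD hec hea heb x (hPre2 x hx1) hx2
    · exact q13 x hx2 hx1
    · exact q23 x hx2 hx1
    · exact absurd rfl hne
    · exact q3D hda hda hdb hdc x hx1 hx2
    · exact q3D hdb hda hdb hdc x hx1 hx2
    · exact q3D hdc hda hdb hdc x hx1 hx2
    · exact q3D hea hea heb hec x hx1 hx2
    · exact q3D heb hea heb hec x hx1 hx2
    · exact q3D hec hea heb hec x hx1 hx2
    · exact qPD hda hda hdb x (hPre1 x hx2) hx1
    · exact qPD hda hda hdb x (hPre2 x hx2) hx1
    · exact q3D hda hda hdb hdc x hx2 hx1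
    · exact absurd rfl hne
    · exact qDD hda hdb (s9_sym2_ne_right hda.symm hab) x hx1 hx2
    · exact qDD hda hdc (s9_sym2_ne_right hda.symm hca.symm) x hx1 hx2
    · exact qDD hda hea (s9_sym2_ne_left hde hda) x hx1 hx2
    · exact qDD hda heb (s9_sym2_ne_left hde hdb) x hx1 hx2
    · exact qDD hda hec (s9_sym2_ne_left hde hdc) x hx1 hx2
    · exact qPD hdb hda hdb x (hPre1 x hx2) hx1
    · exact qPD hdb hda hdb x (hPre2 x hx2) hx1
    · exact q3D hdb hda hdb hdc x hx2 hx1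
    · exact qDD hdb hda (s9_sym2_ne_right hdb.symm hab.symm) x hx1 hx2
    · exact absurd rfl hne
    · exact qDD hdb hdc (s9_sym2_ne_right hdb.symm hcb.symm) x hx1 hx2
    · exact qDD hdb hea (s9_sym2_ne_left hde hda) x hx1 hx2
    · exact qDD hdb heb (s9_sym2_ne_left hde hdb) x hx1 hx2
    · exact qDD hdb hec (s9_sym2_ne_left hde hdc) x hx1 hx2
    · exact qPD hdc hda hdb x (hPre1 x hx2) hx1
    · exact qPD hdc hda hdb x (hPre2 x hx2) hx1
    · exact q3D hdc hda hdb hdc x hx2 hx1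
    · exact qDD hdc hda (s9_sym2_ne_right hdc.symm hca) x hx1 hx2
    · exact qDD hdc hdb (s9_sym2_ne_right hdc.symm hcb) x hx1 hx2
    · exact absurd rfl hne
    · exact qDD hdc hea (s9_sym2_ne_left hde hda) x hx1 hx2
    · exact qDD hdc heb (s9_sym2_ne_left hde hdb) x hx1 hx2
    · exact qDD hdc hec (s9_sym2_ne_left hde hdc) x hx1 hx2
    · exact qPD hea hea heb x (hPre1 x hx2) hx1
    · exact qPD hea hea heb x (hPre2 x hx2) hx1
    · exact q3D hea hea heb hec x hx2 hx1
    · exact qDD hea hda (s9_sym2_ne_left hde.symm hea) x hx1 hx2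
    · exact qDD hea hdb (s9_sym2_ne_left hde.symm heb) x hx1 hx2
    · exact qDD hea hdc (s9_sym2_ne_left hde.symm hec) x hx1 hx2
    · exact absurd rfl hne
    · exact qDD hea heb (s9_sym2_ne_right hea.symm hab) x hx1 hx2
    · exact qDD hea hec (s9_sym2_ne_right hea.symm hca.symm) x hx1 hx2
    · exact qPD heb hea heb x (hPre1 x hx2) hx1
    · exact qPD heb hea heb x (hPre2 x hx2) hx1
    · exact q3D heb hea heb hec x hx2 hx1
    · exact qDD heb hda (s9_sym2_ne_left hde.symm hea) x hx1 hx2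
    · exact qDD heb hdb (s9_sym2_ne_left hde.symm heb) x hx1 hx2
    · exact qDD heb hdc (s9_sym2_ne_left hde.symm hec) x hx1 hx2
    · exact qDD heb hea (s9_sym2_ne_right heb.symm hab.symm) x hx1 hx2
    · exact absurd rfl hne
    · exact qDD heb hec (s9_sym2_ne_right heb.symm hcb.symm) x hx1 hx2
    · exact qPD hec hea heb x (hPre1 x hx2) hx1
    · exact qPD hec hea heb x (hPre2 x hx2) hx1
    · exact q3D hec hea heb hec x hx2 hx1
    · exact qDD hec hda (s9_sym2_ne_left hde.symm hea) x hx1 hx2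
    · exact qDD hec hdb (s9_sym2_ne_left hde.symm heb) x hx1 hx2
    · exact qDD hec hdc (s9_sym2_ne_left hde.symm hec) x hx1 hx2
    · exact qDD hec hea (s9_sym2_ne_right hec.symm hca) x hx1 hx2
    · exact qDD hec heb (s9_sym2_ne_right hec.symm hcb) x hx1 hx2
    · exact absurd rfl hne


private lemma s9_conY {G : SimpleGraph V} [DecidableEq V]
    (E : SubdivEmb (completeGraph (Fin 5)) G)
    {a b c d : Fin 5} (hab : a ≠ b) (hcd : c ≠ d) (hca : c ≠ a) (hcb : c ≠ b)
    (hda : d ≠ a) (hdb : d ≠ b)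
    {x' : V} (hx'P : x' ∈ (E.walk (s9_K5adj hab)).support)
    (hx'a : x' ≠ E.f a) (hx'b : x' ≠ E.f b)
    {y : V} (hynf : y ∉ Set.range E.f) (hyP' : y ∈ (E.walk (s9_K5adj hcd)).support)
    (Q : G.Walk x' y) (hQpath : Q.IsPath)
    (C1 : ∀ w : Fin 5, E.f w ∉ Q.support)
    (C2 : ∀ z ∈ Q.support, z ∈ (E.walk (s9_K5adj hab)).support → z = x')
    (C3 : ∀ z ∈ Q.support, z ∈ (E.walk (s9_K5adj hcd)).support → z = y)
    (C4 : ∀ z ∈ Q.support, ∀ ⦃w1 w2 : Fin 5⦄ (h1 : w1 ≠ w2), s(w1,w2) ≠ s(a,b) →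
      s(w1,w2) ≠ s(c,d) → z ∉ (E.walk (s9_K5adj h1)).support) :
    ContainsSubdiv G (completeBipartiteGraph (Fin 3) (Fin 3)) := by
  have hfP : ∀ w : Fin 5, E.f w ∈ (E.walk (s9_K5adj hab)).support → w = a ∨ w = b :=
    fun w hw => E.branch (s9_K5adj hab) w hw
  have hx'nf : x' ∉ Set.range E.f := by
    rintro ⟨w, hw⟩
    rcases hfP w (hw ▸ hx'P) with h | h
    · exact hx'a (by rw [← hw, h])
    · exact hx'b (by rw [← hw, h])
  have cPD : ∀ w : Fin 5, w ≠ a → w ≠ b → E.f w ∈ (E.walk (s9_K5adj hab)).support → False :=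
    fun w na nb h => (hfP w h).elim na nb
  have hPre1 : ∀ z, z ∈ ((E.walk (s9_K5adj hab)).takeUntil x' hx'P).reverse.support →
      z ∈ (E.walk (s9_K5adj hab)).support := by
    intro z hz
    rw [Walk.support_reverse, List.mem_reverse] at hz
    exact Walk.support_takeUntil_subset _ hx'P hz
  have hPre2 : ∀ z, z ∈ ((E.walk (s9_K5adj hab)).dropUntil x' hx'P).support →
      z ∈ (E.walk (s9_K5adj hab)).support :=
    fun z hz => Walk.support_dropUntil_subset _ hx'P hz
  have hPreU1 : ∀ z, z ∈ ((E.walk (s9_K5adj hcd)).takeUntil y hyP').support →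
      z ∈ (E.walk (s9_K5adj hcd)).support :=
    fun z hz => Walk.support_takeUntil_subset _ hyP' hz
  have hPreU2 : ∀ z, z ∈ ((E.walk (s9_K5adj hcd)).dropUntil y hyP').reverse.support →
      z ∈ (E.walk (s9_K5adj hcd)).support := by
    intro z hz
    rw [Walk.support_reverse, List.mem_reverse] at hz
    exact Walk.support_dropUntil_subset _ hyP' hz
  have intoRgY : ∀ z : V, (z = x' ∨ z = y ∨ z = E.f a ∨ z = E.f b ∨ z = E.f c ∨ z = E.f d) →
      z ∈ Set.range (s9_g x' (E.f c) (E.f d) (E.f a) (E.f b) y) := by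
    rintro z (rfl|rfl|rfl|rfl|rfl|rfl)
    · exact s9_g_range (Or.inl rfl)
    · exact s9_g_range (Or.inr (Or.inr (Or.inr (Or.inr (Or.inr rfl)))))
    · exact s9_g_range (Or.inr (Or.inr (Or.inr (Or.inl rfl))))
    · exact s9_g_range (Or.inr (Or.inr (Or.inr (Or.inr (Or.inl rfl)))))
    · exact s9_g_range (Or.inr (Or.inl rfl))
    · exact s9_g_range (Or.inr (Or.inr (Or.inl rfl)))
  have qDDY : ∀ {w1 w2 w3 w4 : Fin 5} (h1 : w1 ≠ w2) (h2 : w3 ≠ w4),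
      s(w1,w2) ≠ s(w3,w4) →
      (w1 = a ∨ w1 = b ∨ w1 = c ∨ w1 = d) → (w2 = a ∨ w2 = b ∨ w2 = c ∨ w2 = d) →
      ∀ z, z ∈ (E.walk (s9_K5adj h1)).support → z ∈ (E.walk (s9_K5adj h2)).support →
      z ∈ Set.range (s9_g x' (E.f c) (E.f d) (E.f a) (E.f b) y) := by
    intro w1 w2 w3 w4 h1 h2 hs m1 m2 z hz1 hz2
    obtain ⟨w, hw12, _, heq⟩ := s9_DDg E (s9_K5adj h1) (s9_K5adj h2) hs hz1 hz2
    refine intoRgY z ?_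
    rcases hw12 with rfl | rfl
    · rcases m1 with rfl|rfl|rfl|rfl
      · exact Or.inr (Or.inr (Or.inl heq))
      · exact Or.inr (Or.inr (Or.inr (Or.inl heq)))
      · exact Or.inr (Or.inr (Or.inr (Or.inr (Or.inl heq))))
      · exact Or.inr (Or.inr (Or.inr (Or.inr (Or.inr heq))))
    · rcases m2 with rfl|rfl|rfl|rfl
      · exact Or.inr (Or.inr (Or.inl heq))
      · exact Or.inr (Or.inr (Or.inr (Or.inl heq)))
      · exact Or.inr (Or.inr (Or.inr (Or.inr (Or.inl heq))))
      · exact Or.inr (Or.inr (Or.inr (Or.inr (Or.inr heq))))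
  have cyP : y ∈ (E.walk (s9_K5adj hab)).support → False := by
    intro h
    obtain ⟨w, _, _, heq⟩ := s9_DDg E (s9_K5adj hcd) (s9_K5adj hab)
      (s9_sym2_ne_left hca hcb) hyP' h
    exact hynf ⟨w, heq.symm⟩
  have cyD : ∀ {w1 w2 : Fin 5} (h1 : w1 ≠ w2), s(w1,w2) ≠ s(c,d) →
      y ∈ (E.walk (s9_K5adj h1)).support → False := by
    intro w1 w2 h1 hs h
    obtain ⟨w, _, _, heq⟩ := s9_DDg E (s9_K5adj h1) (s9_K5adj hcd) hs h hyP'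
    exact hynf ⟨w, heq.symm⟩
  have cx'D : ∀ {w1 w2 : Fin 5} (h1 : w1 ≠ w2), w1 ≠ a → w1 ≠ b →
      x' ∈ (E.walk (s9_K5adj h1)).support → False := by
    intro w1 w2 h1 na nb hx
    obtain ⟨w, _, _, heq⟩ := s9_DDg E (s9_K5adj h1) (s9_K5adj hab)
      (s9_sym2_ne_left na nb) hx hx'P
    exact hx'nf ⟨w, heq.symm⟩
  have cT1b : E.f b ∈ ((E.walk (s9_K5adj hab)).takeUntil x' hx'P).reverse.support → False := by
    intro h
    rw [Walk.support_reverse, List.mem_reverse] at h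
    exact hx'b.symm (s9_take_drop_inter (E.isPath _) hx'P _ h (Walk.end_mem_support _))
  have cT2a : E.f a ∈ ((E.walk (s9_K5adj hab)).dropUntil x' hx'P).support → False := by
    intro h
    exact hx'a.symm (s9_take_drop_inter (E.isPath _) hx'P _ (Walk.start_mem_support _) h)
  have cU1d : E.f d ∈ ((E.walk (s9_K5adj hcd)).takeUntil y hyP').support → False := by
    intro h
    exact hynf ⟨d, s9_take_drop_inter (E.isPath _) hyP' _ h (Walk.end_mem_support _)⟩
  have cU2c : E.f c ∈ ((E.walk (s9_K5adj hcd)).dropUntil y hyP').reverse.support → False := by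
    intro h
    rw [Walk.support_reverse, List.mem_reverse] at h
    exact hynf ⟨c, s9_take_drop_inter (E.isPath _) hyP' _ (Walk.start_mem_support _) h⟩
  have q12 : ∀ z, z ∈ ((E.walk (s9_K5adj hab)).takeUntil x' hx'P).reverse.support →
      z ∈ ((E.walk (s9_K5adj hab)).dropUntil x' hx'P).support →
      z ∈ Set.range (s9_g x' (E.f c) (E.f d) (E.f a) (E.f b) y) := by
    intro z h1 h2
    rw [Walk.support_reverse, List.mem_reverse] at h1
    exact intoRgY z (Or.inl (s9_take_drop_inter (E.isPath _) hx'P z h1 h2))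
  have qU12 : ∀ z, z ∈ ((E.walk (s9_K5adj hcd)).takeUntil y hyP').support →
      z ∈ ((E.walk (s9_K5adj hcd)).dropUntil y hyP').reverse.support →
      z ∈ Set.range (s9_g x' (E.f c) (E.f d) (E.f a) (E.f b) y) := by
    intro z h1 h2
    rw [Walk.support_reverse, List.mem_reverse] at h2
    exact intoRgY z (Or.inr (Or.inl (s9_take_drop_inter (E.isPath _) hyP' z h1 h2)))
  have qQP : ∀ z, z ∈ Q.support → z ∈ (E.walk (s9_K5adj hab)).support →
      z ∈ Set.range (s9_g x' (E.f c) (E.f d) (E.f a) (E.f b) y) :=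
    fun z h1 h2 => intoRgY z (Or.inl (C2 z h1 h2))
  have qQP' : ∀ z, z ∈ Q.support → z ∈ (E.walk (s9_K5adj hcd)).support →
      z ∈ Set.range (s9_g x' (E.f c) (E.f d) (E.f a) (E.f b) y) :=
    fun z h1 h2 => intoRgY z (Or.inr (Or.inl (C3 z h1 h2)))
  refine ⟨s9_mkK33Emb (s9_g x' (E.f c) (E.f d) (E.f a) (E.f b) y)
    ?_
    (fun i j => match i, j with
      | ⟨0,_⟩, ⟨0,_⟩ => ((E.walk (s9_K5adj hab)).takeUntil x' hx'P).reverse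
      | ⟨0,_⟩, ⟨1,_⟩ => (E.walk (s9_K5adj hab)).dropUntil x' hx'P
      | ⟨0,_⟩, ⟨_+2,_⟩ => Q
      | ⟨1,_⟩, ⟨0,_⟩ => E.walk (s9_K5adj hca)
      | ⟨1,_⟩, ⟨1,_⟩ => E.walk (s9_K5adj hcb)
      | ⟨1,_⟩, ⟨_+2,_⟩ => (E.walk (s9_K5adj hcd)).takeUntil y hyP'
      | ⟨_+2,_⟩, ⟨0,_⟩ => E.walk (s9_K5adj hda)
      | ⟨_+2,_⟩, ⟨1,_⟩ => E.walk (s9_K5adj hdb)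
      | ⟨_+2,_⟩, ⟨_+2,_⟩ => ((E.walk (s9_K5adj hcd)).dropUntil y hyP').reverse)
    ?_ ?_ ?_⟩
  · -- injectivity
    intro s t hst
    have n01 : x' ≠ E.f c := fun h => hx'nf ⟨c, h.symm⟩
    have n02 : x' ≠ E.f d := fun h => hx'nf ⟨d, h.symm⟩
    have n05 : x' ≠ y := fun h => cyP (h ▸ hx'P)
    have n15 : E.f c ≠ y := fun h => hynf ⟨c, h⟩
    have n25 : E.f d ≠ y := fun h => hynf ⟨d, h⟩
    have n35 : E.f a ≠ y := fun h => hynf ⟨a, h⟩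
    have n45 : E.f b ≠ y := fun h => hynf ⟨b, h⟩
    fin_cases s <;> fin_cases t <;>
      first
      | rfl
      | exact absurd hst n01 | exact absurd hst n01.symm
      | exact absurd hst n02 | exact absurd hst n02.symm
      | exact absurd hst hx'a | exact absurd hst hx'a.symm
      | exact absurd hst hx'b | exact absurd hst hx'b.symm
      | exact absurd hst n05 | exact absurd hst n05.symm
      | exact absurd hst n15 | exact absurd hst n15.symm
      | exact absurd hst n25 | exact absurd hst n25.symm
      | exact absurd hst n35 | exact absurd hst n35.symm
      | exact absurd hst n45 | exact absurd hst n45.symm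
      | exact absurd hst (E.inj.ne hab) | exact absurd hst (E.inj.ne hab).symm
      | exact absurd hst (E.inj.ne hcd) | exact absurd hst (E.inj.ne hcd).symm
      | exact absurd hst (E.inj.ne hca) | exact absurd hst (E.inj.ne hca).symm
      | exact absurd hst (E.inj.ne hcb) | exact absurd hst (E.inj.ne hcb).symm
      | exact absurd hst (E.inj.ne hda) | exact absurd hst (E.inj.ne hda).symm
      | exact absurd hst (E.inj.ne hdb) | exact absurd hst (E.inj.ne hdb).symm
  · -- paths
    intro i j
    fin_cases i <;> fin_cases j
    · exact ((E.isPath (s9_K5adj hab)).takeUntil hx'P).reverse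
    · exact (E.isPath (s9_K5adj hab)).dropUntil hx'P
    · exact hQpath
    · exact E.isPath (s9_K5adj hca)
    · exact E.isPath (s9_K5adj hcb)
    · exact (E.isPath (s9_K5adj hcd)).takeUntil hyP'
    · exact E.isPath (s9_K5adj hda)
    · exact E.isPath (s9_K5adj hdb)
    · exact ((E.isPath (s9_K5adj hcd)).dropUntil hyP').reverse
  · -- branch
    intro i j w hw
    fin_cases i <;> fin_cases j <;> (rcases w with wi | wj <;> [fin_cases wi; fin_cases wj])
    · exact Or.inl rfl
    · exact (cPD c hca hcb (hPre1 _ hw)).elim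
    · exact (cPD d hda hdb (hPre1 _ hw)).elim
    · exact Or.inr rfl
    · exact (cT1b hw).elim
    · exact (cyP (hPre1 _ hw)).elim
    · exact Or.inl rfl
    · exact (cPD c hca hcb (hPre2 _ hw)).elim
    · exact (cPD d hda hdb (hPre2 _ hw)).elim
    · exact (cT2a hw).elim
    · exact Or.inr rfl
    · exact (cyP (hPre2 _ hw)).elim
    · exact Or.inl rfl
    · exact (C1 c hw).elim
    · exact (C1 d hw).elim
    · exact (C1 a hw).elim
    · exact (C1 b hw).elim
    · exact Or.inr rfl
    · exact (cx'D hca hca hcb hw).elim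
    · exact Or.inl rfl
    · exact ((E.branch (s9_K5adj hca) d hw).elim (fun h => absurd h hcd.symm) (fun h => absurd h hda))
    · exact Or.inr rfl
    · exact ((E.branch (s9_K5adj hca) b hw).elim (fun h => absurd h hcb.symm) (fun h => absurd h hab.symm))
    · exact (cyD hca (s9_sym2_ne_right hca.symm hda.symm) hw).elim
    · exact (cx'D hcb hca hcb hw).elim
    · exact Or.inl rfl
    · exact ((E.branch (s9_K5adj hcb) d hw).elim (fun h => absurd h hcd.symm) (fun h => absurd h hdb))
    · exact ((E.branch (s9_K5adj hcb) a hw).elim (fun h => absurd h hca.symm) (fun h => absurd h hab))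
    · exact Or.inr rfl
    · exact (cyD hcb (s9_sym2_ne_right hcb.symm hdb.symm) hw).elim
    · exact (cx'D hcd hca hcb (hPreU1 _ hw)).elim
    · exact Or.inl rfl
    · exact (cU1d hw).elim
    · exact ((E.branch (s9_K5adj hcd) a (hPreU1 _ hw)).elim (fun h => absurd h hca.symm) (fun h => absurd h hda.symm))
    · exact ((E.branch (s9_K5adj hcd) b (hPreU1 _ hw)).elim (fun h => absurd h hcb.symm) (fun h => absurd h hdb.symm))
    · exact Or.inr rfl
    · exact (cx'D hda hda hdb hw).elim
    · exact ((E.branch (s9_K5adj hda) c hw).elim (fun h => absurd h hcd) (fun h => absurd h hca))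
    · exact Or.inl rfl
    · exact Or.inr rfl
    · exact ((E.branch (s9_K5adj hda) b hw).elim (fun h => absurd h hdb.symm) (fun h => absurd h hab.symm))
    · exact (cyD hda (s9_sym2_ne_right hca.symm hda.symm) hw).elim
    · exact (cx'D hdb hda hdb hw).elim
    · exact ((E.branch (s9_K5adj hdb) c hw).elim (fun h => absurd h hcd) (fun h => absurd h hcb))
    · exact Or.inl rfl
    · exact ((E.branch (s9_K5adj hdb) a hw).elim (fun h => absurd h hda.symm) (fun h => absurd h hab))
    · exact Or.inr rfl
    · exact (cyD hdb (s9_sym2_ne_right hcb.symm hdb.symm) hw).elim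
    · exact (cx'D hcd hca hcb (hPreU2 _ hw)).elim
    · exact (cU2c hw).elim
    · exact Or.inl rfl
    · exact ((E.branch (s9_K5adj hcd) a (hPreU2 _ hw)).elim (fun h => absurd h hca.symm) (fun h => absurd h hda.symm))
    · exact ((E.branch (s9_K5adj hcd) b (hPreU2 _ hw)).elim (fun h => absurd h hcb.symm) (fun h => absurd h hdb.symm))
    · exact Or.inr rfl
  · -- disjoint
    intro i j k l hne x hx1 hx2
    fin_cases i <;> fin_cases j <;> fin_cases k <;> fin_cases l
    · exact absurd rfl hne
    · exact q12 x hx1 hx2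
    · exact qQP x hx2 (hPre1 x hx1)
    · exact qDDY hab hca (s9_sym2_ne_right hcb.symm hab.symm) (Or.inl rfl) (Or.inr (Or.inl rfl)) x (hPre1 x hx1) hx2
    · exact qDDY hab hcb (s9_sym2_ne_left hca.symm hab) (Or.inl rfl) (Or.inr (Or.inl rfl)) x (hPre1 x hx1) hx2
    · exact qDDY hab hcd (s9_sym2_ne_left hca.symm hda.symm) (Or.inl rfl) (Or.inr (Or.inl rfl)) x (hPre1 x hx1) (hPreU1 x hx2)
    · exact qDDY hab hda (s9_sym2_ne_right hdb.symm hab.symm) (Or.inl rfl) (Or.inr (Or.inl rfl)) x (hPre1 x hx1) hx2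
    · exact qDDY hab hdb (s9_sym2_ne_left hda.symm hab) (Or.inl rfl) (Or.inr (Or.inl rfl)) x (hPre1 x hx1) hx2
    · exact qDDY hab hcd (s9_sym2_ne_left hca.symm hda.symm) (Or.inl rfl) (Or.inr (Or.inl rfl)) x (hPre1 x hx1) (hPreU2 x hx2)
    · exact q12 x hx2 hx1
    · exact absurd rfl hne
    · exact qQP x hx2 (hPre2 x hx1)
    · exact qDDY hab hca (s9_sym2_ne_right hcb.symm hab.symm) (Or.inl rfl) (Or.inr (Or.inl rfl)) x (hPre2 x hx1) hx2
    · exact qDDY hab hcb (s9_sym2_ne_left hca.symm hab) (Or.inl rfl) (Or.inr (Or.inl rfl)) x (hPre2 x hx1) hx2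
    · exact qDDY hab hcd (s9_sym2_ne_left hca.symm hda.symm) (Or.inl rfl) (Or.inr (Or.inl rfl)) x (hPre2 x hx1) (hPreU1 x hx2)
    · exact qDDY hab hda (s9_sym2_ne_right hdb.symm hab.symm) (Or.inl rfl) (Or.inr (Or.inl rfl)) x (hPre2 x hx1) hx2
    · exact qDDY hab hdb (s9_sym2_ne_left hda.symm hab) (Or.inl rfl) (Or.inr (Or.inl rfl)) x (hPre2 x hx1) hx2
    · exact qDDY hab hcd (s9_sym2_ne_left hca.symm hda.symm) (Or.inl rfl) (Or.inr (Or.inl rfl)) x (hPre2 x hx1) (hPreU2 x hx2)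
    · exact qQP x hx1 (hPre1 x hx2)
    · exact qQP x hx1 (hPre2 x hx2)
    · exact absurd rfl hne
    · exact (C4 x hx1 hca (s9_sym2_ne_left hca hcb) (s9_sym2_ne_right hca.symm hda.symm) hx2).elim
    · exact (C4 x hx1 hcb (s9_sym2_ne_left hca hcb) (s9_sym2_ne_right hcb.symm hdb.symm) hx2).elim
    · exact qQP' x hx1 (hPreU1 x hx2)
    · exact (C4 x hx1 hda (s9_sym2_ne_left hda hdb) (s9_sym2_ne_right hca.symm hda.symm) hx2).elim
    · exact (C4 x hx1 hdb (s9_sym2_ne_left hda hdb) (s9_sym2_ne_right hcb.symm hdb.symm) hx2).elim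
    · exact qQP' x hx1 (hPreU2 x hx2)
    · exact qDDY hca hab (s9_sym2_ne_left hca hcb) (Or.inr (Or.inr (Or.inl rfl))) (Or.inl rfl) x hx1 (hPre1 x hx2)
    · exact qDDY hca hab (s9_sym2_ne_left hca hcb) (Or.inr (Or.inr (Or.inl rfl))) (Or.inl rfl) x hx1 (hPre2 x hx2)
    · exact (C4 x hx2 hca (s9_sym2_ne_left hca hcb) (s9_sym2_ne_right hca.symm hda.symm) hx1).elim
    · exact absurd rfl hne
    · exact qDDY hca hcb (s9_sym2_ne_right hca.symm hab) (Or.inr (Or.inr (Or.inl rfl))) (Or.inl rfl) x hx1 hx2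
    · exact qDDY hca hcd (s9_sym2_ne_right hca.symm hda.symm) (Or.inr (Or.inr (Or.inl rfl))) (Or.inl rfl) x hx1 (hPreU1 x hx2)
    · exact qDDY hca hda (s9_sym2_ne_left hcd hca) (Or.inr (Or.inr (Or.inl rfl))) (Or.inl rfl) x hx1 hx2
    · exact qDDY hca hdb (s9_sym2_ne_left hcd hcb) (Or.inr (Or.inr (Or.inl rfl))) (Or.inl rfl) x hx1 hx2
    · exact qDDY hca hcd (s9_sym2_ne_right hca.symm hda.symm) (Or.inr (Or.inr (Or.inl rfl))) (Or.inl rfl) x hx1 (hPreU2 x hx2)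
    · exact qDDY hcb hab (s9_sym2_ne_left hca hcb) (Or.inr (Or.inr (Or.inl rfl))) (Or.inr (Or.inl rfl)) x hx1 (hPre1 x hx2)
    · exact qDDY hcb hab (s9_sym2_ne_left hca hcb) (Or.inr (Or.inr (Or.inl rfl))) (Or.inr (Or.inl rfl)) x hx1 (hPre2 x hx2)
    · exact (C4 x hx2 hcb (s9_sym2_ne_left hca hcb) (s9_sym2_ne_right hcb.symm hdb.symm) hx1).elim
    · exact qDDY hcb hca (s9_sym2_ne_right hcb.symm hab.symm) (Or.inr (Or.inr (Or.inl rfl))) (Or.inr (Or.inl rfl)) x hx1 hx2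
    · exact absurd rfl hne
    · exact qDDY hcb hcd (s9_sym2_ne_right hcb.symm hdb.symm) (Or.inr (Or.inr (Or.inl rfl))) (Or.inr (Or.inl rfl)) x hx1 (hPreU1 x hx2)
    · exact qDDY hcb hda (s9_sym2_ne_left hcd hca) (Or.inr (Or.inr (Or.inl rfl))) (Or.inr (Or.inl rfl)) x hx1 hx2
    · exact qDDY hcb hdb (s9_sym2_ne_left hcd hcb) (Or.inr (Or.inr (Or.inl rfl))) (Or.inr (Or.inl rfl)) x hx1 hx2
    · exact qDDY hcb hcd (s9_sym2_ne_right hcb.symm hdb.symm) (Or.inr (Or.inr (Or.inl rfl))) (Or.inr (Or.inl rfl)) x hx1 (hPreU2 x hx2)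
    · exact qDDY hcd hab (s9_sym2_ne_left hca hcb) (Or.inr (Or.inr (Or.inl rfl))) (Or.inr (Or.inr (Or.inr rfl))) x (hPreU1 x hx1) (hPre1 x hx2)
    · exact qDDY hcd hab (s9_sym2_ne_left hca hcb) (Or.inr (Or.inr (Or.inl rfl))) (Or.inr (Or.inr (Or.inr rfl))) x (hPreU1 x hx1) (hPre2 x hx2)
    · exact qQP' x hx2 (hPreU1 x hx1)
    · exact qDDY hcd hca (s9_sym2_ne_right hcd.symm hda) (Or.inr (Or.inr (Or.inl rfl))) (Or.inr (Or.inr (Or.inr rfl))) x (hPreU1 x hx1) hx2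
    · exact qDDY hcd hcb (s9_sym2_ne_right hcd.symm hdb) (Or.inr (Or.inr (Or.inl rfl))) (Or.inr (Or.inr (Or.inr rfl))) x (hPreU1 x hx1) hx2
    · exact absurd rfl hne
    · exact qDDY hcd hda (s9_sym2_ne_left hcd hca) (Or.inr (Or.inr (Or.inl rfl))) (Or.inr (Or.inr (Or.inr rfl))) x (hPreU1 x hx1) hx2
    · exact qDDY hcd hdb (s9_sym2_ne_left hcd hcb) (Or.inr (Or.inr (Or.inl rfl))) (Or.inr (Or.inr (Or.inr rfl))) x (hPreU1 x hx1) hx2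
    · exact qU12 x hx1 hx2
    · exact qDDY hda hab (s9_sym2_ne_left hda hdb) (Or.inr (Or.inr (Or.inr rfl))) (Or.inl rfl) x hx1 (hPre1 x hx2)
    · exact qDDY hda hab (s9_sym2_ne_left hda hdb) (Or.inr (Or.inr (Or.inr rfl))) (Or.inl rfl) x hx1 (hPre2 x hx2)
    · exact (C4 x hx2 hda (s9_sym2_ne_left hda hdb) (s9_sym2_ne_right hca.symm hda.symm) hx1).elim
    · exact qDDY hda hca (s9_sym2_ne_left hcd.symm hda) (Or.inr (Or.inr (Or.inr rfl))) (Or.inl rfl) x hx1 hx2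
    · exact qDDY hda hcb (s9_sym2_ne_left hcd.symm hdb) (Or.inr (Or.inr (Or.inr rfl))) (Or.inl rfl) x hx1 hx2
    · exact qDDY hda hcd (s9_sym2_ne_right hca.symm hda.symm) (Or.inr (Or.inr (Or.inr rfl))) (Or.inl rfl) x hx1 (hPreU1 x hx2)
    · exact absurd rfl hne
    · exact qDDY hda hdb (s9_sym2_ne_right hda.symm hab) (Or.inr (Or.inr (Or.inr rfl))) (Or.inl rfl) x hx1 hx2
    · exact qDDY hda hcd (s9_sym2_ne_right hca.symm hda.symm) (Or.inr (Or.inr (Or.inr rfl))) (Or.inl rfl) x hx1 (hPreU2 x hx2)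
    · exact qDDY hdb hab (s9_sym2_ne_left hda hdb) (Or.inr (Or.inr (Or.inr rfl))) (Or.inr (Or.inl rfl)) x hx1 (hPre1 x hx2)
    · exact qDDY hdb hab (s9_sym2_ne_left hda hdb) (Or.inr (Or.inr (Or.inr rfl))) (Or.inr (Or.inl rfl)) x hx1 (hPre2 x hx2)
    · exact (C4 x hx2 hdb (s9_sym2_ne_left hda hdb) (s9_sym2_ne_right hcb.symm hdb.symm) hx1).elim
    · exact qDDY hdb hca (s9_sym2_ne_left hcd.symm hda) (Or.inr (Or.inr (Or.inr rfl))) (Or.inr (Or.inl rfl)) x hx1 hx2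
    · exact qDDY hdb hcb (s9_sym2_ne_left hcd.symm hdb) (Or.inr (Or.inr (Or.inr rfl))) (Or.inr (Or.inl rfl)) x hx1 hx2
    · exact qDDY hdb hcd (s9_sym2_ne_right hcb.symm hdb.symm) (Or.inr (Or.inr (Or.inr rfl))) (Or.inr (Or.inl rfl)) x hx1 (hPreU1 x hx2)
    · exact qDDY hdb hda (s9_sym2_ne_right hdb.symm hab.symm) (Or.inr (Or.inr (Or.inr rfl))) (Or.inr (Or.inl rfl)) x hx1 hx2
    · exact absurd rfl hne
    · exact qDDY hdb hcd (s9_sym2_ne_right hcb.symm hdb.symm) (Or.inr (Or.inr (Or.inr rfl))) (Or.inr (Or.inl rfl)) x hx1 (hPreU2 x hx2)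
    · exact qDDY hcd hab (s9_sym2_ne_left hca hcb) (Or.inr (Or.inr (Or.inl rfl))) (Or.inr (Or.inr (Or.inr rfl))) x (hPreU2 x hx1) (hPre1 x hx2)
    · exact qDDY hcd hab (s9_sym2_ne_left hca hcb) (Or.inr (Or.inr (Or.inl rfl))) (Or.inr (Or.inr (Or.inr rfl))) x (hPreU2 x hx1) (hPre2 x hx2)
    · exact qQP' x hx2 (hPreU2 x hx1)
    · exact qDDY hcd hca (s9_sym2_ne_right hcd.symm hda) (Or.inr (Or.inr (Or.inl rfl))) (Or.inr (Or.inr (Or.inr rfl))) x (hPreU2 x hx1) hx2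
    · exact qDDY hcd hcb (s9_sym2_ne_right hcd.symm hdb) (Or.inr (Or.inr (Or.inl rfl))) (Or.inr (Or.inr (Or.inr rfl))) x (hPreU2 x hx1) hx2
    · exact qU12 x hx2 hx1
    · exact qDDY hcd hda (s9_sym2_ne_left hcd hca) (Or.inr (Or.inr (Or.inl rfl))) (Or.inr (Or.inr (Or.inr rfl))) x (hPreU2 x hx1) hx2
    · exact qDDY hcd hdb (s9_sym2_ne_left hcd hcb) (Or.inr (Or.inr (Or.inl rfl))) (Or.inr (Or.inr (Or.inr rfl))) x (hPreU2 x hx1) hx2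
    · exact absurd rfl hne

private lemma s9_main {G : SimpleGraph V} [DecidableEq V] (h3 : KConnected 3 G)
    (E : SubdivEmb (completeGraph (Fin 5)) G)
    {a b : Fin 5} (hab : a ≠ b) {x : V}
    (hxP : x ∈ (E.walk (s9_K5adj hab)).support) (hxa : x ≠ E.f a) (hxb : x ≠ E.f b) :
    ContainsSubdiv G (completeBipartiteGraph (Fin 3) (Fin 3)) := by
  have hfab : E.f a ≠ E.f b := E.inj.ne hab
  obtain ⟨c0, hc0a, hc0b⟩ := s9_dec1 a b
  have hs2 : ({E.f a, E.f b} : Set V).ncard < 3 := by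
    rw [Set.ncard_pair hfab]; omega
  obtain ⟨W0, hW0⟩ := s9_walk_avoiding (h3.2 _ hs2) (u := x) (v := E.f c0)
    (by simp only [Set.mem_insert_iff, Set.mem_singleton_iff]; push_neg; exact ⟨hxa, hxb⟩)
    (by simp only [Set.mem_insert_iff, Set.mem_singleton_iff]; push_neg
        exact ⟨E.inj.ne hc0a, E.inj.ne hc0b⟩)
  -- TmA : vertices of the subdivision that are not interior to P
  have hfc0T : E.f c0 ∈ {v : V | (∃ (c d : Fin 5) (h1 : c ≠ d),
      v ∈ (E.walk (s9_K5adj h1)).support) ∧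
      (v ∈ (E.walk (s9_K5adj hab)).support → v = E.f a ∨ v = E.f b)} := by
    refine ⟨⟨c0, a, hc0a, Walk.start_mem_support _⟩, ?_⟩
    intro hmem
    exact (E.branch (s9_K5adj hab) c0 hmem).imp (fun h => by rw [h]) (fun h => by rw [h])
  obtain ⟨y, hyTmA, W1, hW1first, hW1sub⟩ := s9_first_mem _ W0 hfc0T
  obtain ⟨x', hx'A, W2, hW2first, hW2sub⟩ := s9_first_mem
    {v : V | v ∈ (E.walk (s9_K5adj hab)).support ∧ v ≠ E.f a ∧ v ≠ E.f b}
    W1.reverse (by exact ⟨hxP, hxa, hxb⟩)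
  obtain ⟨hx'P, hx'a, hx'b⟩ := hx'A
  have hQpath : W2.reverse.bypass.IsPath := Walk.bypass_isPath _
  have hQsub : ∀ z ∈ W2.reverse.bypass.support, z ∈ W0.support := by
    intro z hz
    have h1 := Walk.support_bypass_subset _ hz
    rw [Walk.support_reverse, List.mem_reverse] at h1
    have h2 := hW2sub z h1
    rw [Walk.support_reverse, List.mem_reverse] at h2
    exact hW1sub z h2
  have hQab : ∀ z ∈ W2.reverse.bypass.support, z ≠ E.f a ∧ z ≠ E.f b := by
    intro z hz
    have := hW0 z (hQsub z hz)
    simp only [Set.mem_insert_iff, Set.mem_singleton_iff] at this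
    push_neg at this
    exact this
  have hQA : ∀ z ∈ W2.reverse.bypass.support, z ∈ (E.walk (s9_K5adj hab)).support → z = x' := by
    intro z hz hzP
    have h1 := Walk.support_bypass_subset _ hz
    rw [Walk.support_reverse, List.mem_reverse] at h1
    exact hW2first z h1 ⟨hzP, (hQab z hz).1, (hQab z hz).2⟩
  have hQTmA : ∀ z ∈ W2.reverse.bypass.support,
      ∀ (c d : Fin 5) (h1 : c ≠ d), z ∈ (E.walk (s9_K5adj h1)).support → z = x' ∨ z = y := by
    intro z hz c d h1 hzw
    by_cases hA : z ∈ (E.walk (s9_K5adj hab)).support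
    · exact Or.inl (hQA z hz hA)
    · refine Or.inr ?_
      have h1' := Walk.support_bypass_subset _ hz
      rw [Walk.support_reverse, List.mem_reverse] at h1'
      have h2 := hW2sub z h1'
      rw [Walk.support_reverse, List.mem_reverse] at h2
      exact hW1first z h2 ⟨⟨c, d, h1, hzw⟩, fun hzP => absurd hzP hA⟩
  have hx'nf : x' ∉ Set.range E.f := by
    rintro ⟨w, hw⟩
    rcases E.branch (s9_K5adj hab) w (hw ▸ hx'P) with h | h
    · exact hx'a (by rw [← hw, h])
    · exact hx'b (by rw [← hw, h])
  have hyQ : y ∈ W2.reverse.bypass.support := Walk.end_mem_support _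
  have hy_ab : y ≠ E.f a ∧ y ≠ E.f b := hQab y hyQ
  by_cases hyf : y ∈ Set.range E.f
  · -- Case 1: y is a branch vertex f w0
    obtain ⟨w0, hw0⟩ := hyf
    have hw0a : w0 ≠ a := fun h => hy_ab.1 (by rw [← hw0, h])
    have hw0b : w0 ≠ b := fun h => hy_ab.2 (by rw [← hw0, h])
    refine s9_conX E hab hw0a hw0b hx'P hx'a hx'b
      (W2.reverse.bypass.copy rfl hw0.symm) ?_ ?_ ?_ ?_
    · rw [Walk.isPath_copy]; exact hQpath
    · intro w hw
      rw [Walk.support_copy] at hw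
      obtain ⟨u, hu, -⟩ := s9_dec1 w w
      rcases hQTmA _ hw w u (Ne.symm hu) (Walk.start_mem_support _) with h | h
      · exact absurd ⟨w, h⟩ hx'nf
      · exact E.inj (hw0 ▸ h)
    · intro z hz hzP
      rw [Walk.support_copy] at hz
      exact hQA z hz hzP
    · intro z hz w1 w2 h1 na nb nc hzw
      rw [Walk.support_copy] at hz
      rcases hQTmA z hz w1 w2 h1 hzw with rfl | rfl
      · obtain ⟨w, -, -, heq⟩ := s9_DDg E (s9_K5adj h1) (s9_K5adj hab)
          (s9_sym2_ne_left na nb) hzw hx'P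
        exact absurd ⟨w, heq.symm⟩ hx'nf
      · exact ⟨w0, hw0⟩
  · -- Case 2: y is interior to some path P'
    obtain ⟨⟨c1, d1, h1, hy1⟩, hy2⟩ := hyTmA
    have hQnF : ∀ w : Fin 5, E.f w ∉ W2.reverse.bypass.support := by
      intro w hw
      obtain ⟨u, hu, -⟩ := s9_dec1 w w
      rcases hQTmA _ hw w u (Ne.symm hu) (Walk.start_mem_support _) with h | h
      · exact absurd ⟨w, h⟩ hx'nf
      · exact hyf ⟨w, h⟩
    have hsab : s(c1, d1) ≠ s(a, b) := by
      intro heq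
      rcases Sym2.eq_iff.mp heq with ⟨rfl, rfl⟩ | ⟨rfl, rfl⟩
      · rcases hy2 hy1 with h | h
        · exact hyf ⟨_, h.symm⟩
        · exact hyf ⟨_, h.symm⟩
      · have hy1' : y ∈ (E.walk (s9_K5adj hab)).reverse.support := by
          rw [← E.symm (s9_K5adj hab)]
          exact hy1
        rw [Walk.support_reverse, List.mem_reverse] at hy1'
        rcases hy2 hy1' with h | h
        · exact hyf ⟨_, h.symm⟩
        · exact hyf ⟨_, h.symm⟩
    by_cases hsh : (c1 = a ∨ c1 = b) ∨ (d1 = a ∨ d1 = b)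
    · -- shared endpoint: construction X with appended path
      -- normalize so the shared vertex is the source
      obtain ⟨s1, o1, hso, hs1ab, ho1a, ho1b, hyo⟩ :
          ∃ (s1 o1 : Fin 5) (hso : s1 ≠ o1), (s1 = a ∨ s1 = b) ∧ o1 ≠ a ∧ o1 ≠ b ∧
            y ∈ (E.walk (s9_K5adj hso)).support := by
        have hnot2 : ¬ ((c1 = a ∨ c1 = b) ∧ (d1 = a ∨ d1 = b)) := by
          rintro ⟨hc | hc, hd | hd⟩
          · exact h1 (hc.trans hd.symm)
          · exact hsab (by rw [hc, hd])
          · exact hsab (by rw [hc, hd, Sym2.eq_swap])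
          · exact h1 (hc.trans hd.symm)
        rcases hsh with hc | hd
        · have hd1a : d1 ≠ a := fun h => hnot2 ⟨hc, Or.inl h⟩
          have hd1b : d1 ≠ b := fun h => hnot2 ⟨hc, Or.inr h⟩
          exact ⟨c1, d1, h1, hc, hd1a, hd1b, hy1⟩
        · have hc1a : c1 ≠ a := fun h => hnot2 ⟨Or.inl h, hd⟩
          have hc1b : c1 ≠ b := fun h => hnot2 ⟨Or.inr h, hd⟩
          refine ⟨d1, c1, Ne.symm h1, hd, hc1a, hc1b, ?_⟩
          have : y ∈ (E.walk ((s9_K5adj h1).symm)).support := by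
            rw [E.symm (s9_K5adj h1), Walk.support_reverse, List.mem_reverse]
            exact hy1
          exact this
      have hfs1y : E.f s1 ∈ ((E.walk (s9_K5adj hso)).dropUntil y hyo).support → False := by
        intro h
        exact hyf ⟨s1, s9_take_drop_inter (E.isPath _) hyo _ (Walk.start_mem_support _) h⟩
      have hsegP' : ∀ z ∈ ((E.walk (s9_K5adj hso)).dropUntil y hyo).support,
          z ∈ (E.walk (s9_K5adj hso)).support :=
        fun z hz => Walk.support_dropUntil_subset _ hyo hz
      have hsoab : s(s1, o1) ≠ s(a, b) := s9_sym2_ne_right ho1a ho1b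
      have hT3path : (W2.reverse.bypass.append
          ((E.walk (s9_K5adj hso)).dropUntil y hyo)).IsPath := by
        refine s9_isPath_append hQpath ((E.isPath _).dropUntil hyo) ?_
        intro z hz hz2
        rcases hQTmA z hz s1 o1 hso (hsegP' z hz2) with rfl | rfl
        · obtain ⟨w, -, -, heq⟩ := s9_DDg E (s9_K5adj hso) (s9_K5adj hab) hsoab
            (hsegP' z hz2) hx'P
          exact absurd ⟨w, heq.symm⟩ hx'nf
        · rfl
      refine s9_conX E hab ho1a ho1b hx'P hx'a hx'b
        (W2.reverse.bypass.append ((E.walk (s9_K5adj hso)).dropUntil y hyo)) hT3path ?_ ?_ ?_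
      · intro w hw
        rw [Walk.mem_support_append_iff] at hw
        rcases hw with hw | hw
        · exact absurd hw (hQnF w)
        · rcases E.branch (s9_K5adj hso) w (hsegP' _ hw) with rfl | rfl
          · exact absurd hw hfs1y
          · rfl
      · intro z hz hzP
        rw [Walk.mem_support_append_iff] at hz
        rcases hz with hz | hz
        · exact hQA z hz hzP
        · obtain ⟨w, hw1, hw2, heq⟩ := s9_DDg E (s9_K5adj hab) (s9_K5adj hso)
            (Ne.symm hsoab) hzP (hsegP' _ hz)
          have hws1 : w = s1 := by
            rcases hw2 with rfl | rfl
            · rfl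
            · rcases hw1 with rfl | rfl
              · exact absurd rfl ho1a
              · exact absurd rfl ho1b
          subst hws1
          exact absurd (heq ▸ hz) hfs1y
      · intro z hz w1 w2 hw12 na nb no hzw
        have hw1s1 : w1 ≠ s1 := by
          rcases hs1ab with rfl | rfl
          · exact na
          · exact nb
        rw [Walk.mem_support_append_iff] at hz
        rcases hz with hz | hz
        · rcases hQTmA z hz w1 w2 hw12 hzw with rfl | rfl
          · obtain ⟨w, -, -, heq⟩ := s9_DDg E (s9_K5adj hw12) (s9_K5adj hab)
              (s9_sym2_ne_left na nb) hzw hx'P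
            exact absurd ⟨w, heq.symm⟩ hx'nf
          · obtain ⟨w, -, -, heq⟩ := s9_DDg E (s9_K5adj hw12) (s9_K5adj hso)
              (s9_sym2_ne_left hw1s1 no) hzw hyo
            exact absurd ⟨w, heq.symm⟩ hyf
        · obtain ⟨w, -, -, heq⟩ := s9_DDg E (s9_K5adj hso) (s9_K5adj hw12)
            (Ne.symm (s9_sym2_ne_left hw1s1 no)) (hsegP' _ hz) hzw
          exact ⟨w, heq.symm⟩
    · -- disjoint case: construction Y
      push_neg at hsh
      obtain ⟨⟨hc1a, hc1b⟩, hd1a, hd1b⟩ := hsh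
      refine s9_conY E hab h1 hc1a hc1b hd1a hd1b hx'P hx'a hx'b hyf hy1
        W2.reverse.bypass hQpath hQnF ?_ ?_ ?_
      · exact fun z hz hzP => hQA z hz hzP
      · intro z hz hzP'
        rcases hQTmA z hz c1 d1 h1 hzP' with rfl | rfl
        · obtain ⟨w, -, -, heq⟩ := s9_DDg E (s9_K5adj h1) (s9_K5adj hab) hsab hzP' hx'P
          exact absurd ⟨w, heq.symm⟩ hx'nf
        · rfl
      · intro z hz w1 w2 hw12 hs1 hs2 hzw
        rcases hQTmA z hz w1 w2 hw12 hzw with rfl | rfl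
        · obtain ⟨w, -, -, heq⟩ := s9_DDg E (s9_K5adj hw12) (s9_K5adj hab) hs1 hzw hx'P
          exact absurd ⟨w, heq.symm⟩ hx'nf
        · obtain ⟨w, -, -, heq⟩ := s9_DDg E (s9_K5adj hw12) (s9_K5adj h1) hs2 hzw hy1
          exact absurd ⟨w, heq.symm⟩ hyf

private lemma s9_extend {G : SimpleGraph V}
    (E : SubdivEmb (completeGraph (Fin 5)) G)
    {a0 b0 : Fin 5} (hne : a0 ≠ b0) (R : G.Walk (E.f a0) (E.f b0)) (hRpath : R.IsPath)
    (hR1 : ∀ w : Fin 5, E.f w ∈ R.support → w = a0 ∨ w = b0)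
    (hadj : ∀ ⦃w1 w2 : Fin 5⦄, w1 ≠ w2 → G.Adj (E.f w1) (E.f w2)) :
    ∃ E' : SubdivEmb (completeGraph (Fin 5)) G,
      E'.f = E.f ∧ (E'.walk (s9_K5adj hne)).support = R.support := by
  refine ⟨⟨E.f, E.inj,
    fun w1 w2 h =>
      if h1 : w1 = a0 ∧ w2 = b0 then R.copy (by rw [h1.1]) (by rw [h1.2])
      else if h2 : w1 = b0 ∧ w2 = a0 then R.reverse.copy (by rw [h2.1]) (by rw [h2.2])
      else Walk.cons (hadj h) Walk.nil, ?_, ?_, ?_, ?_⟩, rfl, ?_⟩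
  · -- isPath
    intro w1 w2 h
    beta_reduce
    split_ifs <;>
      first
      | (rw [Walk.isPath_copy]; exact hRpath)
      | (rw [Walk.isPath_copy]; exact hRpath.reverse)
      | (simp [Walk.isPath_def, E.inj.ne h]; done)
  · -- symm
    intro w1 w2 h
    beta_reduce
    split_ifs <;>
      first
      | rfl
      | (simp only [Walk.reverse_copy]; done)
      | (simp [Walk.reverse_copy]; done)
      | (exfalso; simp_all; done)
      | (exfalso; obtain ⟨rfl, rfl⟩ := ‹_ ∧ _›; simp_all; done)
  · -- branch
    intro w1 w2 h w hw
    beta_reduce at hw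
    split_ifs at hw with h1 h2
    · rw [Walk.support_copy] at hw
      exact (hR1 w hw).imp (fun e => e.trans h1.1.symm) (fun e => e.trans h1.2.symm)
    · rw [Walk.support_copy, Walk.support_reverse, List.mem_reverse] at hw
      exact ((hR1 w hw).imp (fun e => e.trans h2.2.symm) (fun e => e.trans h2.1.symm)).symm
    · simp only [Walk.support_cons, Walk.support_nil, List.mem_cons,
        List.mem_singleton, List.not_mem_nil, or_false] at hw
      exact hw.imp (fun e => E.inj e) (fun e => E.inj e)
  · -- disjoint
    intro a b c d h₁ h₂ hne' x hx1 hx2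
    by_cases j1 : a = a0 ∧ b = b0
    · by_cases k1 : c = a0 ∧ d = b0
      · exact absurd (by rw [j1.1, j1.2, k1.1, k1.2]) hne'
      · by_cases k2 : c = b0 ∧ d = a0
        · exact absurd (by rw [j1.1, j1.2, k2.1, k2.2, Sym2.eq_swap]) hne'
        · beta_reduce at hx2
          rw [dif_neg k1, dif_neg k2] at hx2
          simp only [Walk.support_cons, Walk.support_nil, List.mem_cons,
            List.mem_singleton, List.not_mem_nil, or_false] at hx2
          exact hx2.elim (fun e => ⟨c, e.symm⟩) (fun e => ⟨d, e.symm⟩)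
    · by_cases j2 : a = b0 ∧ b = a0
      · by_cases k1 : c = a0 ∧ d = b0
        · exact absurd (by rw [j2.1, j2.2, k1.1, k1.2, Sym2.eq_swap]) hne'
        · by_cases k2 : c = b0 ∧ d = a0
          · exact absurd (by rw [j2.1, j2.2, k2.1, k2.2]) hne'
          · beta_reduce at hx2
            rw [dif_neg k1, dif_neg k2] at hx2
            simp only [Walk.support_cons, Walk.support_nil, List.mem_cons,
              List.mem_singleton, List.not_mem_nil, or_false] at hx2
            exact hx2.elim (fun e => ⟨c, e.symm⟩) (fun e => ⟨d, e.symm⟩)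
      · beta_reduce at hx1
        rw [dif_neg j1, dif_neg j2] at hx1
        simp only [Walk.support_cons, Walk.support_nil, List.mem_cons,
          List.mem_singleton, List.not_mem_nil, or_false] at hx1
        exact hx1.elim (fun e => ⟨a, e.symm⟩) (fun e => ⟨b, e.symm⟩)
  · show ((if h1 : a0 = a0 ∧ b0 = b0 then R.copy (by rw [h1.1]) (by rw [h1.2])
      else if h2 : a0 = b0 ∧ b0 = a0 then R.reverse.copy (by rw [h2.1]) (by rw [h2.2])
      else Walk.cons (hadj hne) Walk.nil) : G.Walk (E.f a0) (E.f b0)).support = R.support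
    rw [dif_pos ⟨rfl, rfl⟩, Walk.support_copy]

end Stmt9Aux

/-- Hall's theorem: every 3-connected nonplanar graph other than `K₅`
contains a subdivision of `K_{3,3}`. -/
theorem stmt9 {V : Type*} [Fintype V] (G : SimpleGraph V) (h3 : KConnected 3 G)
    (hnp : ¬ Planar G) (hK5 : IsEmpty (G ≃g completeGraph (Fin 5))) :
    ContainsSubdiv G (completeBipartiteGraph (Fin 3) (Fin 3)) := by
  classical
  by_cases hK33 : ContainsSubdiv G (completeBipartiteGraph (Fin 3) (Fin 3))
  · exact hK33
  have hC5 : ContainsSubdiv G (completeGraph (Fin 5)) := by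
    by_contra hC5
    exact hnp ⟨hC5, hK33⟩
  obtain ⟨E⟩ := hC5
  by_cases hlen : ∃ (a b : Fin 5) (h : a ≠ b), 2 ≤ (E.walk (s9_K5adj h)).length
  · obtain ⟨a, b, hab, hl⟩ := hlen
    obtain ⟨x, hxP, hxa, hxb⟩ := s9_interior _ (E.isPath (s9_K5adj hab)) hl
    exact s9_main h3 E hab hxP hxa hxb
  · push_neg at hlen
    have hadj : ∀ ⦃w1 w2 : Fin 5⦄, w1 ≠ w2 → G.Adj (E.f w1) (E.f w2) := by
      intro w1 w2 h
      exact s9_adj_of_short (E.walk (s9_K5adj h)) (E.inj.ne h)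
        (by have := hlen w1 w2 h; omega)
    by_cases hsurj : ∀ v : V, v ∈ Set.range E.f
    · -- then G is complete on 5 vertices, i.e. G ≃g K₅: contradiction
      exfalso
      have key : ∀ u v : V, G.Adj u v ↔ u ≠ v := by
        intro u v
        constructor
        · exact fun h => h.ne
        · intro h
          obtain ⟨w1, rfl⟩ := hsurj u
          obtain ⟨w2, rfl⟩ := hsurj v
          exact hadj (fun hh => h (congrArg E.f hh))
      have hbij : Function.Bijective E.f := ⟨E.inj, fun v => hsurj v⟩
      exact hK5.false
        { toEquiv := (Equiv.ofBijective E.f hbij).symm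
          map_rel_iff' := by
            intro u v
            simp only [completeGraph_eq_top, top_adj]
            rw [key]
            exact not_congr (Equiv.apply_eq_iff_eq _) }
    · -- there is a vertex outside the K₅; build a detour path and lengthen one edge
      push_neg at hsurj
      obtain ⟨v, hv⟩ := hsurj
      obtain ⟨Wv, -⟩ := s9_walk_avoiding (s := (∅ : Set V)) (h3.2 ∅ (by simp))
        (u := v) (v := E.f 0) (by simp) (by simp)
      obtain ⟨z1, ⟨a0, ha0⟩, Q1', hQ1first, -⟩ := s9_first_mem (Set.range E.f) Wv ⟨0, rfl⟩
      have hQ1S : ∀ x ∈ (Q1'.copy rfl ha0.symm).bypass.support,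
          x ∈ Set.range E.f → x = E.f a0 := by
        intro x hx hxr
        have hx' := Walk.support_bypass_subset _ hx
        rw [Walk.support_copy] at hx'
        exact (hQ1first x hx' hxr).trans ha0.symm
      obtain ⟨u0, hu0, -⟩ := s9_dec1 a0 a0
      obtain ⟨Wv2, hWv2⟩ := s9_walk_avoiding (s := {E.f a0})
        (h3.2 {E.f a0} (by simp)) (u := v) (v := E.f u0)
        (by simp only [Set.mem_singleton_iff]; exact fun h => hv ⟨a0, h.symm⟩)
        (by simp only [Set.mem_singleton_iff]; exact E.inj.ne hu0)
      obtain ⟨z2, ⟨b0, hb0⟩, Q2', hQ2first, hQ2sub⟩ := s9_first_mem (Set.range E.f) Wv2 ⟨u0, rfl⟩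
      have hQ2S : ∀ x ∈ (Q2'.copy rfl hb0.symm).bypass.support,
          x ∈ Set.range E.f → x = E.f b0 := by
        intro x hx hxr
        have hx' := Walk.support_bypass_subset _ hx
        rw [Walk.support_copy] at hx'
        exact (hQ2first x hx' hxr).trans hb0.symm
      have hQ2avoid : ∀ x ∈ (Q2'.copy rfl hb0.symm).bypass.support, x ≠ E.f a0 := by
        intro x hx
        have hx' := Walk.support_bypass_subset _ hx
        rw [Walk.support_copy] at hx'
        have := hWv2 x (hQ2sub x hx')
        simpa using this
      have hba0 : a0 ≠ b0 := by
        intro h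
        exact hQ2avoid (E.f b0) (Walk.end_mem_support _) (by rw [h])
      obtain ⟨z, hzQ1, Q3, hQ3first, hQ3sub⟩ :=
        s9_first_mem {x | x ∈ (Q1'.copy rfl ha0.symm).bypass.support}
          (Q2'.copy rfl hb0.symm).bypass.reverse
          (by exact Walk.start_mem_support _)
      have hQ3Q2 : ∀ x ∈ Q3.bypass.support, x ∈ (Q2'.copy rfl hb0.symm).bypass.support := by
        intro x hx
        have h1 := Walk.support_bypass_subset _ hx
        have h2 := hQ3sub x h1
        rwa [Walk.support_reverse, List.mem_reverse] at h2
      have hRpath : (((Q1'.copy rfl ha0.symm).bypass.dropUntil z hzQ1).reverse.append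
          Q3.bypass.reverse).IsPath := by
        refine s9_isPath_append ?_ (Walk.bypass_isPath _).reverse ?_
        · exact ((Walk.bypass_isPath _).dropUntil hzQ1).reverse
        · intro x hx hx2
          rw [Walk.support_reverse, List.mem_reverse] at hx hx2
          have hxQ1 : x ∈ (Q1'.copy rfl ha0.symm).bypass.support :=
            Walk.support_dropUntil_subset _ hzQ1 hx
          exact hQ3first x (Walk.support_bypass_subset _ hx2) hxQ1
      have hR1 : ∀ w : Fin 5, E.f w ∈ (((Q1'.copy rfl ha0.symm).bypass.dropUntil z
          hzQ1).reverse.append Q3.bypass.reverse).support → w = a0 ∨ w = b0 := by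
        intro w hw
        rw [Walk.mem_support_append_iff] at hw
        rcases hw with hw | hw
        · rw [Walk.support_reverse, List.mem_reverse] at hw
          exact Or.inl (E.inj (hQ1S _ (Walk.support_dropUntil_subset _ hzQ1 hw) ⟨w, rfl⟩))
        · rw [Walk.support_reverse, List.mem_reverse] at hw
          exact Or.inr (E.inj (hQ2S _ (hQ3Q2 _ hw) ⟨w, rfl⟩))
      obtain ⟨E', hEf, hEsupp⟩ := s9_extend E hba0 _ hRpath hR1 hadj
      have hzR : z ∈ (E'.walk (s9_K5adj hba0)).support := by
        rw [hEsupp, Walk.mem_support_append_iff]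
        left
        rw [Walk.support_reverse, List.mem_reverse]
        exact Walk.start_mem_support _
      have hza : z ≠ E'.f a0 := by
        rw [hEf]
        intro h
        exact hQ2avoid z (hQ3Q2 z (Walk.end_mem_support _)) h
      have hzb : z ≠ E'.f b0 := by
        rw [hEf]
        intro h
        exact hba0 (E.inj ((hQ1S z hzQ1 ⟨b0, h.symm⟩).symm.trans h))
      exact s9_main h3 E' hba0 hzR hza hzb
end

section
/- Let G be a 2-connected graph with a spanning tree T. Then there are at most two orientations of G in which every fundamental cycle of T becomes a directed cycle, and these two orientations are reverses of each other. -/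
open SimpleGraph Set

variable {V W : Type*}

section Stmt17Aux

variable {V : Type*} [DecidableEq V] {G T : SimpleGraph V} {O₁ O₂ : V → V → Prop}

private lemma myPathAppend {a v b : V} {p : G.Walk a v} {q : G.Walk v b}
    (hp : p.IsPath) (hq : q.IsPath)
    (h : ∀ z ∈ p.support, z ∈ q.support → z = v) : (p.append q).IsPath := by
  rw [SimpleGraph.Walk.isPath_def, SimpleGraph.Walk.support_append]
  refine List.Nodup.append hp.support_nodup ?_ ?_
  · have := hq.support_nodup
    rw [q.support_eq_cons] at this
    exact this.of_cons
  · intro z hz1 hz2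
    have hzq : z ∈ q.support := by
      rw [q.support_eq_cons]; exact List.mem_cons_of_mem _ hz2
    have hzv : z = v := h z hz1 hzq
    subst hzv
    have := hq.support_nodup
    rw [q.support_eq_cons] at this
    exact (List.nodup_cons.mp this).1 hz2

/-- Agreement of the two orientations is symmetric on edges of `G`. -/
private lemma agree_symm (hO₁ : IsOrientation G O₁) (hO₂ : IsOrientation G O₂)
    {u v : V} (h : G.Adj u v) :
    ((O₁ u v ↔ O₂ u v) ↔ (O₁ v u ↔ O₂ v u)) := by
  have h1 := (hO₁.1 u v).mp h
  have h2 := (hO₂.1 u v).mp h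
  have a1 := hO₁.2 u v
  have a2 := hO₁.2 v u
  have b1 := hO₂.2 u v
  have b2 := hO₂.2 v u
  tauto

/-- On a fundamental cycle, agreement of the two orientations is constant. -/
private lemma cycle_agree (hO₁ : IsOrientation G O₁) (hO₂ : IsOrientation G O₂)
    (hg₁ : GoodOrient G T O₁) (hg₂ : GoodOrient G T O₂)
    {x y : V} (hxy : G.Adj x y) (hnt : ¬ T.Adj x y)
    (p : T.Walk y x) (hp : p.IsPath) :
    ∀ d ∈ p.darts, ((O₁ d.toProd.1 d.toProd.2 ↔ O₂ d.toProd.1 d.toProd.2)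
      ↔ (O₁ x y ↔ O₂ x y)) := by
  intro d hd
  have a2 := hO₁.2 y x
  have b2 := hO₂.2 y x
  have a4 := hO₁.2 d.toProd.2 d.toProd.1
  have b4 := hO₂.2 d.toProd.2 d.toProd.1
  rcases hg₁ x y hxy hnt p hp with ⟨h1, hd1⟩ | ⟨h1, hd1⟩ <;>
    rcases hg₂ x y hxy hnt p hp with ⟨h2, hd2⟩ | ⟨h2, hd2⟩ <;>
      have e1 := hd1 d hd <;> have e2 := hd2 d hd
  · exact iff_of_true ⟨fun _ => e2, fun _ => e1⟩ ⟨fun _ => h2, fun _ => h1⟩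
  · exact iff_of_false (fun hiff => (b4 e2) (hiff.mp e1))
      (fun hiff => (b2 h2) (hiff.mp h1))
  · exact iff_of_false (fun hiff => (a4 e1) (hiff.mpr e2))
      (fun hiff => (a2 h1) (hiff.mpr h2))
  · exact iff_of_true ⟨fun h => absurd h (a4 e1), fun h => absurd h (b4 e2)⟩
      ⟨fun h => absurd h (a2 h1), fun h => absurd h (b2 h2)⟩

/-- Two tree-neighbors of `v` connected to the same vertex avoiding `v` coincide. -/
private lemma unique_side (hT : T.IsTree) {v u u' x : V}
    (hvu : T.Adj v u) (hvu' : T.Adj v u')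
    (w : T.Walk u x) (hw : v ∉ w.support)
    (w' : T.Walk u' x) (hw' : v ∉ w'.support) : u = u' := by
  have hwp : v ∉ (w.toPath : T.Walk u x).support :=
    fun h => hw (SimpleGraph.Walk.support_toPath_subset _ h)
  have hwp' : v ∉ (w'.toPath : T.Walk u' x).support :=
    fun h => hw' (SimpleGraph.Walk.support_toPath_subset _ h)
  have hp : (SimpleGraph.Walk.cons hvu (w.toPath : T.Walk u x)).IsPath :=
    (w.toPath.2).cons hwp
  have hp' : (SimpleGraph.Walk.cons hvu' (w'.toPath : T.Walk u' x)).IsPath :=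
    (w'.toPath.2).cons hwp'
  have := (hT.existsUnique_path v x).unique hp hp'
  have h1 : (SimpleGraph.Walk.cons hvu (w.toPath : T.Walk u x)).getVert 1 = u := by
    simp [SimpleGraph.Walk.getVert_cons_succ, SimpleGraph.Walk.getVert_zero]
  have h1' : (SimpleGraph.Walk.cons hvu' (w'.toPath : T.Walk u' x)).getVert 1 = u' := by
    simp [SimpleGraph.Walk.getVert_cons_succ, SimpleGraph.Walk.getVert_zero]
  rw [← h1, ← h1', this]

private lemma step_lemma (hTG : T ≤ G) (hT : T.IsTree)
    (hO₁ : IsOrientation G O₁) (hO₂ : IsOrientation G O₂)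
    (hg₁ : GoodOrient G T O₁) (hg₂ : GoodOrient G T O₂)
    {v x y : V} (hx : x ≠ v) (hy : y ≠ v) (hxy : G.Adj x y)
    {u₁ : V} (hvu₁ : T.Adj v u₁) (w₁ : T.Walk u₁ x) (hw₁ : v ∉ w₁.support) :
    ∃ u₂, T.Adj v u₂ ∧ (∃ ww : T.Walk u₂ y, v ∉ ww.support) ∧
      ((O₁ v u₂ ↔ O₂ v u₂) ↔ (O₁ v u₁ ↔ O₂ v u₁)) := by
  classical
  by_cases hvy : ∃ ww : T.Walk x y, v ∉ ww.support
  · obtain ⟨w2, hw2⟩ := hvy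
    refine ⟨u₁, hvu₁, ⟨w₁.append w2, ?_⟩, Iff.rfl⟩
    rw [SimpleGraph.Walk.mem_support_append_iff]
    tauto
  · -- the tree path from x to y goes through v
    obtain ⟨q, hq, -⟩ := hT.existsUnique_path v y
    cases q with
    | nil => exact absurd rfl hy
    | @cons _ u₂ _ h₂ rest =>
      have hrest : rest.IsPath ∧ v ∉ rest.support := by
        rw [SimpleGraph.Walk.cons_isPath_iff] at hq; exact hq
      set w₁p : T.Walk u₁ x := (w₁.toPath : T.Walk u₁ x) with hw₁pdef
      have hw₁p : v ∉ w₁p.support :=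
        fun h => hw₁ (SimpleGraph.Walk.support_toPath_subset _ h)
      have hw₁pp : w₁p.IsPath := w₁.toPath.2
      -- p1 : v → y ; p2 : v → x
      have hp1 : (SimpleGraph.Walk.cons h₂ rest).IsPath := hq
      have hp2 : (SimpleGraph.Walk.cons hvu₁ w₁p).IsPath := hw₁pp.cons hw₁p
      set p : T.Walk y x :=
        (SimpleGraph.Walk.cons h₂ rest).reverse.append (SimpleGraph.Walk.cons hvu₁ w₁p)
        with hpdef
      have hmeet : ∀ z ∈ (SimpleGraph.Walk.cons h₂ rest).reverse.support,
          z ∈ (SimpleGraph.Walk.cons hvu₁ w₁p).support → z = v := by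
        intro z hz1 hz2
        rw [SimpleGraph.Walk.support_reverse, List.mem_reverse,
          SimpleGraph.Walk.support_cons] at hz1
        rw [SimpleGraph.Walk.support_cons] at hz2
        rcases List.mem_cons.mp hz1 with rfl | hz1
        · rfl
        rcases List.mem_cons.mp hz2 with rfl | hz2
        · rfl
        exfalso
        apply hvy
        refine ⟨((w₁p.dropUntil z hz2).reverse).append (rest.dropUntil z hz1), ?_⟩
        rw [SimpleGraph.Walk.mem_support_append_iff]
        rintro (hv | hv)
        · rw [SimpleGraph.Walk.support_reverse, List.mem_reverse] at hv
          exact hw₁p (SimpleGraph.Walk.support_dropUntil_subset _ _ hv)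
        · exact hrest.2 (SimpleGraph.Walk.support_dropUntil_subset _ _ hv)
      have hp : p.IsPath := myPathAppend hp1.reverse hp2 hmeet
      have hnt : ¬ T.Adj x y := by
        intro h
        exact hvy ⟨SimpleGraph.Walk.cons h SimpleGraph.Walk.nil, by
          simp [SimpleGraph.Walk.support_cons, Ne.symm hx, Ne.symm hy]⟩
      -- two darts through v
      have hd₂ : (⟨(u₂, v), h₂.symm⟩ : T.Dart) ∈ p.darts := by
        rw [hpdef, SimpleGraph.Walk.darts_append, List.mem_append]
        left
        rw [SimpleGraph.Walk.darts_reverse, List.mem_reverse, List.mem_map]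
        refine ⟨⟨(v, u₂), h₂⟩, ?_, rfl⟩
        rw [SimpleGraph.Walk.darts_cons]
        exact List.mem_cons_self
      have hd₁ : (⟨(v, u₁), hvu₁⟩ : T.Dart) ∈ p.darts := by
        rw [hpdef, SimpleGraph.Walk.darts_append, List.mem_append]
        right
        rw [SimpleGraph.Walk.darts_cons]
        exact List.mem_cons_self
      have e2 := cycle_agree hO₁ hO₂ hg₁ hg₂ hxy hnt p hp _ hd₂
      have e1 := cycle_agree hO₁ hO₂ hg₁ hg₂ hxy hnt p hp _ hd₁
      have s2 := agree_symm hO₁ hO₂ (hTG h₂)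
      exact ⟨u₂, h₂, ⟨rest, hrest.2⟩, s2.trans (e2.trans e1.symm)⟩

private lemma at_vertex (h2 : KConnected 2 G) (hTG : T ≤ G) (hT : T.IsTree)
    (hO₁ : IsOrientation G O₁) (hO₂ : IsOrientation G O₂)
    (hg₁ : GoodOrient G T O₁) (hg₂ : GoodOrient G T O₂)
    {v u w : V} (hvu : T.Adj v u) (hvw : T.Adj v w) :
    ((O₁ v u ↔ O₂ v u) ↔ (O₁ v w ↔ O₂ v w)) := by
  classical
  have hconn : (G.induce ({v}ᶜ : Set V)).Connected := by
    apply h2.2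
    simp [Set.ncard_singleton]
  have hu : u ∈ ({v}ᶜ : Set V) := by simp [hvu.ne']
  have hw : w ∈ ({v}ᶜ : Set V) := by simp [hvw.ne']
  obtain ⟨W⟩ := hconn.preconnected ⟨u, hu⟩ ⟨w, hw⟩
  have key : ∀ (a b : ({v}ᶜ : Set V)) (W : (G.induce ({v}ᶜ : Set V)).Walk a b),
      (∃ u', T.Adj v u' ∧ (∃ ww : T.Walk u' a.1, v ∉ ww.support) ∧
        ((O₁ v u' ↔ O₂ v u') ↔ (O₁ v u ↔ O₂ v u))) →
      (∃ u', T.Adj v u' ∧ (∃ ww : T.Walk u' b.1, v ∉ ww.support) ∧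
        ((O₁ v u' ↔ O₂ v u') ↔ (O₁ v u ↔ O₂ v u))) := by
    intro a b W
    induction W with
    | nil => exact id
    | @cons a c b hadj W ih =>
      intro ⟨u', hvu', ⟨ww, hww⟩, hA⟩
      apply ih
      have hxy : G.Adj a.1 c.1 := hadj
      have hx : a.1 ≠ v := a.2
      have hy : c.1 ≠ v := c.2
      obtain ⟨u₂, h₂, hww2, hA2⟩ :=
        step_lemma hTG hT hO₁ hO₂ hg₁ hg₂ hx hy hxy hvu' ww hww
      exact ⟨u₂, h₂, hww2, hA2.trans hA⟩
  obtain ⟨u', hvu', ⟨ww, hww⟩, hA⟩ := key _ _ W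
    ⟨u, hvu, ⟨SimpleGraph.Walk.nil, by simp [hvu.ne]⟩, Iff.rfl⟩
  have : u' = w := by
    refine unique_side hT hvu' hvw ww hww SimpleGraph.Walk.nil ?_
    simp [hvw.ne]
  subst this
  exact hA.symm

private lemma tree_const (h2 : KConnected 2 G) (hTG : T ≤ G) (hT : T.IsTree)
    (hO₁ : IsOrientation G O₁) (hO₂ : IsOrientation G O₂)
    (hg₁ : GoodOrient G T O₁) (hg₂ : GoodOrient G T O₂)
    {u v a b : V} (huv : T.Adj u v) (hab : T.Adj a b) :
    ((O₁ a b ↔ O₂ a b) ↔ (O₁ u v ↔ O₂ u v)) := by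
  have key : ∀ (x : V) (W : T.Walk x a),
      (∀ y, T.Adj x y → ((O₁ x y ↔ O₂ x y) ↔ (O₁ u v ↔ O₂ u v))) →
      ((O₁ a b ↔ O₂ a b) ↔ (O₁ u v ↔ O₂ u v)) := by
    intro x W
    induction W with
    | nil => intro hx; exact hx b hab
    | @cons x c a h W ih =>
      intro hx
      refine ih hab ?_
      intro y hcy
      have e1 := at_vertex h2 hTG hT hO₁ hO₂ hg₁ hg₂ hcy h.symm
      have e2 := agree_symm hO₁ hO₂ (hTG h)
      have e3 := hx c h
      exact e1.trans (e2.symm.trans e3)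
  obtain ⟨W⟩ := hT.isConnected.preconnected u a
  exact key u W (fun y hy => at_vertex h2 hTG hT hO₁ hO₂ hg₁ hg₂ hy huv)

end Stmt17Aux
/-- for a 2-connected graph `G` with spanning tree `T`, any two
orientations of `G` making every fundamental cycle of `T` directed are equal or
reverses of each other (so there are at most two such orientations). -/
theorem stmt17 {V : Type*} [Fintype V] (G T : SimpleGraph V) (h2 : KConnected 2 G)
    (hTG : T ≤ G) (hT : T.IsTree)
    (O₁ O₂ : V → V → Prop)
    (hO₁ : IsOrientation G O₁) (hO₂ : IsOrientation G O₂)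
    (hg₁ : GoodOrient G T O₁) (hg₂ : GoodOrient G T O₂) :
    (∀ u v, O₂ u v ↔ O₁ u v) ∨ (∀ u v, O₂ u v ↔ O₁ v u) := by
  classical
  -- find a tree edge
  have hcard : 1 < Fintype.card V := by
    have := h2.1
    rw [Nat.card_eq_fintype_card] at this
    omega
  obtain ⟨a, b, hab⟩ := Fintype.exists_pair_of_one_lt_card hcard
  obtain ⟨Wab⟩ := hT.isConnected.preconnected a b
  have hTedge : ∃ x y : V, T.Adj x y := by
    cases Wab with
    | nil => exact absurd rfl hab
    | cons h _ => exact ⟨_, _, h⟩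
  obtain ⟨a₀, c₀, h₀⟩ := hTedge
  -- agreement on every edge equals agreement on the fixed tree edge
  have main : ∀ u v : V, G.Adj u v →
      ((O₁ u v ↔ O₂ u v) ↔ (O₁ a₀ c₀ ↔ O₂ a₀ c₀)) := by
    intro u v hGuv
    by_cases hTuv : T.Adj u v
    · exact tree_const h2 hTG hT hO₁ hO₂ hg₁ hg₂ h₀ hTuv
    · obtain ⟨p, hp, -⟩ := hT.existsUnique_path v u
      cases p with
      | nil => exact absurd rfl hGuv.ne'
      | @cons _ c _ h rest =>
        have hd : (⟨(v, c), h⟩ : T.Dart) ∈ (SimpleGraph.Walk.cons h rest).darts := by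
          rw [SimpleGraph.Walk.darts_cons]
          exact List.mem_cons_self
        have e1 := cycle_agree hO₁ hO₂ hg₁ hg₂ hGuv hTuv _ hp _ hd
        have e2 := tree_const h2 hTG hT hO₁ hO₂ hg₁ hg₂ h₀ h
        exact e1.symm.trans e2
  by_cases hA0 : (O₁ a₀ c₀ ↔ O₂ a₀ c₀)
  · left
    intro u v
    by_cases hGuv : G.Adj u v
    · exact ((main u v hGuv).mpr hA0).symm
    · have n1 : ¬ O₁ u v := fun h => hGuv ((hO₁.1 u v).mpr (Or.inl h))
      have n2 : ¬ O₂ u v := fun h => hGuv ((hO₂.1 u v).mpr (Or.inl h))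
      exact iff_of_false n2 n1
  · right
    intro u v
    by_cases hGuv : G.Adj u v
    · have hA : ¬ (O₁ u v ↔ O₂ u v) := fun h => hA0 ((main u v hGuv).mp h)
      have h1 := (hO₁.1 u v).mp hGuv
      have h2' := (hO₂.1 u v).mp hGuv
      have a1 := hO₁.2 u v
      have a2 := hO₁.2 v u
      have b1 := hO₂.2 u v
      have b2 := hO₂.2 v u
      tauto
    · have n1 : ¬ O₁ v u := fun h => hGuv ((hO₁.1 u v).mpr (Or.inr h))
      have n2 : ¬ O₂ u v := fun h => hGuv ((hO₂.1 u v).mpr (Or.inl h))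
      exact iff_of_false n2 n1
end
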